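/- arXiv:0904.0782 — 5 statements merged into one kernel-verified Lean document; each statement's English description precedes it below -/
import Mathlib

section
/- Let q ≥ 1, Γ ∈ 𝓕_i(a_1,…,a_q; b_1,…,b_q), and suppose a_q − 1 is a transit point of Γ. Let L_1(Γ) be the graph obtained from Γ by replacing its unique edge of the form (s, a_q − 1) by (s, a_q). Then L_1(Γ) ∈ 𝓕_i(a_1,…,a_{q−1}, a_q − 1; b_1,…,b_q) and sgn_i(L_1(Γ)) = −sgn_i(Γ). -/
open Finset

/-- A "flow graph" is a finite set of directed edges with integer vertices. -/
abbrev FlowGraph : Type := Finset (ℤ × ℤ)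

/-- The edges of `E` beginning at `r`. -/
def beginsAt (E : FlowGraph) (r : ℤ) : Finset (ℤ × ℤ) := E.filter (fun e => e.1 = r)

/-- The edges of `E` ending at `r`. -/
def endsAt (E : FlowGraph) (r : ℤ) : Finset (ℤ × ℤ) := E.filter (fun e => e.2 = r)

/-- `E` is a flow with set of sources `A` and set of sinks `B`:
every edge `(s,t)` has `s < t`; the sources and sinks are pairwise distinct;
exactly one edge begins at each source (and none ends there); exactly one edge
ends at each sink (and none begins there); and every other vertex either meets
no edge, or exactly one edge ends at it and exactly one edge begins at it
(such a vertex is a transit point). -/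
structure IsFlow (E : FlowGraph) (A B : Finset ℤ) : Prop where
  edge_lt : ∀ e ∈ E, e.1 < e.2
  disjAB : Disjoint A B
  source_out : ∀ a ∈ A, (beginsAt E a).card = 1
  source_in : ∀ a ∈ A, endsAt E a = ∅
  sink_in : ∀ b ∈ B, (endsAt E b).card = 1
  sink_out : ∀ b ∈ B, beginsAt E b = ∅
  transit : ∀ r : ℤ, r ∉ A → r ∉ B →
      (beginsAt E r = ∅ ∧ endsAt E r = ∅) ∨
      ((beginsAt E r).card = 1 ∧ (endsAt E r).card = 1)

/-- The set of transit points of the flow `E` with sources `A` and sinks `B`: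
the vertices meeting some edge which are neither sources nor sinks. -/
def transitSet (E : FlowGraph) (A B : Finset ℤ) : Finset ℤ :=
  ((E.image Prod.fst) ∪ (E.image Prod.snd)) \ (A ∪ B)

def IsTransitPoint (E : FlowGraph) (A B : Finset ℤ) (r : ℤ) : Prop :=
  r ∈ transitSet E A B

/-- Two vertices are linked if they lie in the same connected component of `E`. -/
def Linked (E : FlowGraph) (x y : ℤ) : Prop :=
  Relation.ReflTransGen (fun u v => (u, v) ∈ E ∨ (v, u) ∈ E) x y

/-- The finset of values of a family of integers. -/
def srcSet {q : ℕ} (a : Fin q → ℤ) : Finset ℤ := Finset.image a Finset.univ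

/-- Membership in `𝓕_i(a_1,…,a_q; b_1,…,b_q)` : a flow with sources the `a j`,
sinks the `b j`, and no transit point greater than `i`. -/
def InF {q : ℕ} (i : ℤ) (a b : Fin q → ℤ) (E : FlowGraph) : Prop :=
  IsFlow E (srcSet a) (srcSet b) ∧
  ∀ r : ℤ, IsTransitPoint E (srcSet a) (srcSet b) r → r ≤ i

/-- `σ` is the linking permutation: the source `a j` is linked to the sink `b (σ j)`. -/
def IsLinkingPerm {q : ℕ} (E : FlowGraph) (a b : Fin q → ℤ) (σ : Equiv.Perm (Fin q)) : Prop :=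
  ∀ j : Fin q, Linked E (a j) (b (σ j))

/-- The `i`-sign of a flow `E` (with sources `A`, sinks given by the family `b` and
sinks-set `B`), computed from a linking permutation `σ`:
`sgn σ * (-1) ^ (Σ_j (b_j - i) + #transit points)`. -/
def signValue {q : ℕ} (i : ℤ) (b : Fin q → ℤ) (σ : Equiv.Perm (Fin q))
    (E : FlowGraph) (A B : Finset ℤ) : ℤ :=
  (Equiv.Perm.sign σ : ℤ) *
    (-1) ^ ((∑ j : Fin q, (b j - i)).toNat + (transitSet E A B).card)

namespace Walk

/-- the successor of `x` along the unique outgoing edge, or `x` -/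
noncomputable def nxt (E : FlowGraph) (x : ℤ) : ℤ :=
  if h : (beginsAt E x).Nonempty then h.choose.2 else x

noncomputable def followN (E : FlowGraph) : ℕ → ℤ → ℤ
  | 0, x => x
  | n+1, x => followN E n (nxt E x)

noncomputable def sinkOf (E : FlowGraph) (x : ℤ) : ℤ := followN E E.card x

lemma nxt_of_empty {E : FlowGraph} {x : ℤ} (h : beginsAt E x = ∅) : nxt E x = x := by
  rw [nxt, dif_neg]; simp [h]

lemma nxt_mem {E : FlowGraph} {x : ℤ} (h : (beginsAt E x).Nonempty) : (x, nxt E x) ∈ E := by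
  have hm := h.choose_spec
  simp only [beginsAt, mem_filter] at hm
  have : (x, nxt E x) = h.choose := by
    rw [nxt, dif_pos h]; exact Prod.ext hm.2.symm rfl
  rw [this]; exact hm.1

lemma nxt_eq {E : FlowGraph} (hdeg : ∀ y, (beginsAt E y).card ≤ 1) {x v : ℤ}
    (h : (x, v) ∈ E) : nxt E x = v := by
  have hmem : (x, v) ∈ beginsAt E x := by exact mem_filter.mpr ⟨h, rfl⟩
  have hne : (beginsAt E x).Nonempty := ⟨_, hmem⟩
  have h2 := Finset.card_le_one.mp (hdeg x) _ hne.choose_spec _ hmem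
  rw [nxt, dif_pos hne, h2]

lemma followN_of_empty {E : FlowGraph} {x : ℤ} (h : beginsAt E x = ∅) :
    ∀ n, followN E n x = x := by
  intro n; induction n with
  | zero => rfl
  | succ n ih => rw [followN, nxt_of_empty h]; exact ih

lemma le_nxt {E : FlowGraph} (hlt : ∀ e ∈ E, e.1 < e.2) (x : ℤ) : x ≤ nxt E x := by
  by_cases h : (beginsAt E x).Nonempty
  · exact le_of_lt (hlt _ (nxt_mem h))
  · rw [nxt, dif_neg h]

lemma le_followN {E : FlowGraph} (hlt : ∀ e ∈ E, e.1 < e.2) :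
    ∀ n x, x ≤ followN E n x := by
  intro n; induction n with
  | zero => intro x; exact le_refl x
  | succ n ih => intro x; exact le_trans (le_nxt hlt x) (ih (nxt E x))

lemma linked_followN {E : FlowGraph} : ∀ n x, Linked E x (followN E n x) := by
  intro n; induction n with
  | zero => intro x; exact Relation.ReflTransGen.refl
  | succ n ih =>
    intro x
    by_cases h : (beginsAt E x).Nonempty
    · exact Relation.ReflTransGen.head (Or.inl (nxt_mem h)) (ih (nxt E x))
    · rw [followN, nxt, dif_neg h]; exact ih x

/-- after `n` steps where `n` bounds the number of edges from `x` onwards, we stop -/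
lemma followN_terminal {E : FlowGraph} (hlt : ∀ e ∈ E, e.1 < e.2) :
    ∀ n (x : ℤ), (E.filter (fun e => x ≤ e.1)).card ≤ n →
      beginsAt E (followN E n x) = ∅ := by
  intro n
  induction n with
  | zero =>
    intro x hc
    have h0 : (E.filter (fun e => x ≤ e.1)) = ∅ := card_eq_zero.mp (Nat.le_zero.mp hc)
    rw [followN]
    rw [beginsAt, ← Finset.subset_empty, ← h0]
    intro e he; rw [mem_filter] at he ⊢; exact ⟨he.1, le_of_eq he.2.symm⟩
  | succ n ih =>
    intro x hc
    by_cases h : (beginsAt E x).Nonempty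
    · have hmem := nxt_mem h
      have hxv : x < nxt E x := hlt _ hmem
      have hsub : E.filter (fun e => nxt E x ≤ e.1) ⊆
          (E.filter (fun e => x ≤ e.1)).erase (x, nxt E x) := by
        intro e he; rw [mem_filter] at he
        rw [mem_erase, mem_filter]
        refine ⟨?_, he.1, le_trans (le_of_lt hxv) he.2⟩
        intro heq; rw [heq] at he; exact absurd he.2 (by simp; exact hxv)
      have hc2 : (E.filter (fun e => nxt E x ≤ e.1)).card ≤ n := by
        have h1 := card_le_card hsub
        have hmem2 : (x, nxt E x) ∈ E.filter (fun e => x ≤ e.1) := by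
          rw [mem_filter]; exact ⟨hmem, le_refl x⟩
        rw [card_erase_of_mem hmem2] at h1
        omega
      rw [followN]; exact ih (nxt E x) hc2
    · rw [followN, nxt, dif_neg h, followN_of_empty (not_nonempty_iff_eq_empty.mp h)]
      exact not_nonempty_iff_eq_empty.mp h

lemma beginsAt_sinkOf {E : FlowGraph} (hlt : ∀ e ∈ E, e.1 < e.2) (x : ℤ) :
    beginsAt E (sinkOf E x) = ∅ :=
  followN_terminal hlt E.card x (card_le_card (filter_subset _ _))

lemma sinkOf_of_empty {E : FlowGraph} {x : ℤ} (h : beginsAt E x = ∅) : sinkOf E x = x :=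
  followN_of_empty h _

lemma followN_add {E : FlowGraph} : ∀ m n x, followN E (m + n) x = followN E m (followN E n x) := by
  intro m n
  induction n with
  | zero => intro x; rfl
  | succ n ih => intro x; rw [show m + (n+1) = (m+n)+1 from rfl, followN, followN, ih]

lemma sinkOf_edge {E : FlowGraph} (hlt : ∀ e ∈ E, e.1 < e.2)
    (hdeg : ∀ y, (beginsAt E y).card ≤ 1) {u v : ℤ} (h : (u, v) ∈ E) :
    sinkOf E u = sinkOf E v := by
  have hN : 1 ≤ E.card := card_pos.mpr ⟨_, h⟩
  have huv : u < v := hlt _ h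
  have hterm : beginsAt E (followN E (E.card - 1) v) = ∅ := by
    apply followN_terminal hlt
    have hsub : E.filter (fun e => v ≤ e.1) ⊆ E.erase (u, v) := by
      intro e he; rw [mem_filter] at he; rw [mem_erase]
      refine ⟨?_, he.1⟩
      intro heq; rw [heq] at he; simp at he; omega
    have := card_le_card hsub
    rw [card_erase_of_mem h] at this
    omega
  obtain ⟨n, hn⟩ : ∃ n, E.card = n + 1 := ⟨E.card - 1, by omega⟩
  have hn' : E.card - 1 = n := by omega
  rw [hn'] at hterm
  have h1 : sinkOf E u = followN E n v := by
    rw [sinkOf, hn, followN, nxt_eq hdeg h]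
  have h2 : sinkOf E v = followN E n v := by
    rw [sinkOf, hn, show n + 1 = 1 + n by omega, followN_add,
      followN, followN, nxt_of_empty hterm]
  rw [h1, h2]

lemma sinkOf_linked {E : FlowGraph} (hlt : ∀ e ∈ E, e.1 < e.2)
    (hdeg : ∀ y, (beginsAt E y).card ≤ 1) {x y : ℤ} (h : Linked E x y) :
    sinkOf E x = sinkOf E y := by
  induction h with
  | refl => rfl
  | tail _ hstep ih =>
    rcases hstep with h' | h'
    · rw [ih, sinkOf_edge hlt hdeg h']
    · rw [ih, sinkOf_edge hlt hdeg h']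

lemma linked_sinkOf {E : FlowGraph} (x : ℤ) : Linked E x (sinkOf E x) :=
  linked_followN _ _

lemma sinkOf_end_or_eq {E : FlowGraph} (x : ℤ) :
    sinkOf E x = x ∨ ∃ u, (u, sinkOf E x) ∈ E := by
  rw [sinkOf]
  generalize E.card = n
  induction n generalizing x with
  | zero => exact Or.inl rfl
  | succ n ih =>
    rw [followN]
    rcases ih (nxt E x) with h | h
    · rw [h]
      by_cases hne : (beginsAt E x).Nonempty
      · exact Or.inr ⟨x, nxt_mem hne⟩
      · rw [nxt, dif_neg hne]; exact Or.inl rfl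
    · exact Or.inr h

end Walk

namespace Walk

/-- the reversed graph, via negation -/
def rev (E : FlowGraph) : FlowGraph := E.image (fun e => (-e.2, -e.1))

lemma mem_rev {E : FlowGraph} {u v : ℤ} : (u, v) ∈ rev E ↔ (-v, -u) ∈ E := by
  constructor
  · intro h
    rw [rev, mem_image] at h
    obtain ⟨e, he, heq⟩ := h
    have h1 : -e.2 = u := congrArg Prod.fst heq
    have h2 : -e.1 = v := congrArg Prod.snd heq
    have : e = (-v, -u) := Prod.ext (by omega) (by omega)
    rwa [← this]
  · intro h
    rw [rev, mem_image]
    exact ⟨(-v, -u), h, by simp⟩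

lemma rev_lt {E : FlowGraph} (hlt : ∀ e ∈ E, e.1 < e.2) : ∀ e ∈ rev E, e.1 < e.2 := by
  intro e he
  have := hlt _ (mem_rev.mp (show (e.1, e.2) ∈ rev E from he))
  simp at this; omega

lemma beginsAt_rev {E : FlowGraph} (x : ℤ) :
    beginsAt (rev E) x = (endsAt E (-x)).image (fun e => (-e.2, -e.1)) := by
  ext e
  simp only [beginsAt, endsAt, mem_filter, mem_image]
  constructor
  · rintro ⟨he, hx⟩
    obtain ⟨e', he', heq⟩ := mem_image.mp (show e ∈ rev E from he)
    refine ⟨e', ⟨he', ?_⟩, heq⟩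
    have : -e'.2 = e.1 := congrArg Prod.fst heq
    omega
  · rintro ⟨e', ⟨he', hx⟩, heq⟩
    constructor
    · rw [rev, mem_image]; exact ⟨e', he', heq⟩
    · have : -e'.2 = e.1 := congrArg Prod.fst heq
      omega

lemma negpair_inj : Function.Injective (fun e : ℤ × ℤ => (-e.2, -e.1)) := by
  intro e1 e2 h
  have h1 : -e1.2 = -e2.2 := congrArg Prod.fst h
  have h2 : -e1.1 = -e2.1 := congrArg Prod.snd h
  exact Prod.ext (by omega) (by omega)

lemma beginsAt_rev_card {E : FlowGraph} (x : ℤ) :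
    (beginsAt (rev E) x).card = (endsAt E (-x)).card := by
  rw [beginsAt_rev, card_image_of_injective _ negpair_inj]

lemma beginsAt_rev_empty {E : FlowGraph} {x : ℤ} :
    beginsAt (rev E) x = ∅ ↔ endsAt E (-x) = ∅ := by
  rw [beginsAt_rev, image_eq_empty]

lemma linked_rev {E : FlowGraph} {x y : ℤ} (h : Linked E x y) : Linked (rev E) (-x) (-y) := by
  induction h with
  | refl => exact Relation.ReflTransGen.refl
  | tail _ hstep ih =>
    refine Relation.ReflTransGen.tail ih ?_
    rcases hstep with h' | h'
    · right; rw [mem_rev]; simpa using h'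
    · left; rw [mem_rev]; simpa using h'

noncomputable def srcOf (E : FlowGraph) (x : ℤ) : ℤ := - sinkOf (rev E) (-x)

lemma srcOf_le {E : FlowGraph} (hlt : ∀ e ∈ E, e.1 < e.2) (x : ℤ) : srcOf E x ≤ x := by
  have := le_followN (rev_lt hlt) (rev E).card (-x)
  simp only [srcOf, sinkOf]; omega

lemma endsAt_srcOf {E : FlowGraph} (hlt : ∀ e ∈ E, e.1 < e.2) (x : ℤ) :
    endsAt E (srcOf E x) = ∅ := by
  have := beginsAt_sinkOf (rev_lt hlt) (-x) (E := rev E)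
  rw [srcOf]
  exact beginsAt_rev_empty.mp this

lemma srcOf_of_empty {E : FlowGraph} {x : ℤ} (h : endsAt E x = ∅) : srcOf E x = x := by
  rw [srcOf, sinkOf_of_empty (beginsAt_rev_empty.mpr (by rwa [neg_neg]))]; omega

lemma linked_srcOf {E : FlowGraph} (x : ℤ) : Linked E (srcOf E x) x := by
  have h := linked_sinkOf (E := rev E) (-x)
  have h2 := linked_rev h
  rw [rev] at h2
  have himg : rev (rev E) = E := by
    ext e
    rcases e with ⟨u, v⟩
    rw [mem_rev, mem_rev]; simp
  rw [show Finset.image (fun e : ℤ × ℤ => (-e.2, -e.1)) (rev E) = rev (rev E) from rfl,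
    himg, neg_neg] at h2
  have hsym : Symmetric (fun u v => (u, v) ∈ E ∨ (v, u) ∈ E) := by
    intro u v h; exact h.symm
  haveI : Std.Symm (fun u v => (u, v) ∈ E ∨ (v, u) ∈ E) := ⟨fun _ _ h => hsym h⟩
  exact Relation.ReflTransGen.symmetric.symm _ _ h2

lemma srcOf_linked {E : FlowGraph} (hlt : ∀ e ∈ E, e.1 < e.2)
    (hdegIn : ∀ y, (endsAt E y).card ≤ 1) {x y : ℤ} (h : Linked E x y) :
    srcOf E x = srcOf E y := by
  have hdeg' : ∀ y, (beginsAt (rev E) y).card ≤ 1 := by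
    intro y; rw [beginsAt_rev_card]; exact hdegIn _
  have := sinkOf_linked (rev_lt hlt) hdeg' (linked_rev h)
  simp only [srcOf, this]

lemma srcOf_out_or_eq {E : FlowGraph} (x : ℤ) :
    srcOf E x = x ∨ ∃ w, (srcOf E x, w) ∈ E := by
  rcases sinkOf_end_or_eq (E := rev E) (-x) with h | h
  · left; simp only [srcOf, h]; omega
  · obtain ⟨u, hu⟩ := h
    right
    refine ⟨-u, ?_⟩
    exact mem_rev.mp hu

end Walk

namespace Walk

variable {E : FlowGraph} {s t0 t1 : ℤ}

lemma beginsAt_surg_ne (x : ℤ) (hx : x ≠ s) :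
    beginsAt (insert (s, t1) (E.erase (s, t0))) x = beginsAt E x := by
  ext e
  simp only [beginsAt, mem_filter, mem_insert, mem_erase]
  constructor
  · rintro ⟨h1 | ⟨h1, h2⟩, h3⟩
    · exfalso; rw [h1] at h3; exact hx (by simpa using h3.symm)
    · exact ⟨h2, h3⟩
  · rintro ⟨h1, h2⟩
    refine ⟨Or.inr ⟨?_, h1⟩, h2⟩
    intro heq; rw [heq] at h2; exact hx (by simpa using h2.symm)

lemma nxt_surg_ne (x : ℤ) (hx : x ≠ s) :
    nxt (insert (s, t1) (E.erase (s, t0))) x = nxt E x := by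
  have h := beginsAt_surg_ne (E := E) (t0 := t0) (t1 := t1) x hx
  simp only [nxt, h]

lemma followN_surg_of_not_hit {x : ℤ} :
    ∀ n, (∀ m, followN E m x ≠ s) →
      followN (insert (s, t1) (E.erase (s, t0))) n x = followN E n x := by
  intro n
  induction n generalizing x with
  | zero => intro _; rfl
  | succ n ih =>
    intro hm
    have hx : x ≠ s := hm 0
    rw [followN, followN, nxt_surg_ne x hx]
    exact ih (fun m => hm (m + 1))

lemma hit_surg {x : ℤ} :
    ∀ m, followN E m x = s → ∃ m', followN (insert (s, t1) (E.erase (s, t0))) m' x = s := by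
  intro m
  induction m generalizing x with
  | zero => intro h; exact ⟨0, h⟩
  | succ m ih =>
    intro h
    by_cases hx : x = s
    · exact ⟨0, hx⟩
    · obtain ⟨m', hm'⟩ := ih (x := nxt E x) h
      refine ⟨m' + 1, ?_⟩
      rw [followN, nxt_surg_ne x hx]
      exact hm'

end Walk


lemma perm_eq_off {α : Type*} (π ρ : Equiv.Perm α) (j : α) (h : ∀ k, k ≠ j → π k = ρ k) :
    π = ρ := by
  apply Equiv.ext
  intro k
  by_cases hk : k = j
  · subst hk
    by_cases hu : ρ.symm (π k) = k
    · have h2 := congrArg ρ hu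
      rwa [Equiv.apply_symm_apply] at h2
    · exfalso
      have h1 : ρ (ρ.symm (π k)) = π k := Equiv.apply_symm_apply _ _
      rw [← h (ρ.symm (π k)) hu] at h1
      exact hu (π.injective h1)
  · exact h k hk

/-- Lemma 12: if `a_q - 1` is a transit point of `Γ ∈ 𝓕_i(a_1,…,a_q; b_1,…,b_q)`,
then `L_1(Γ)` (replacing the edge `(s, a_q - 1)` by `(s, a_q)`) belongs to
`𝓕_i(a_1,…,a_{q-1}, a_q - 1; b_1,…,b_q)` and has `i`-sign opposite to that of `Γ`. -/
theorem statement1 {q : ℕ} (i : ℤ) (a b : Fin (q + 1) → ℤ)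
    (ha : StrictMono a) (hb : StrictAnti b)
    (hai : ∀ j, a j ≤ i) (hbi : ∀ j, i < b j)
    (E : FlowGraph) (hE : InF i a b E)
    (htr : IsTransitPoint E (srcSet a) (srcSet b) (a (Fin.last q) - 1))
    (s : ℤ) (hs : (s, a (Fin.last q) - 1) ∈ E) :
    InF i (Function.update a (Fin.last q) (a (Fin.last q) - 1)) b
      (insert (s, a (Fin.last q)) (E.erase (s, a (Fin.last q) - 1))) ∧
    ∀ σ τ : Equiv.Perm (Fin (q + 1)),
      IsLinkingPerm E a b σ →
      IsLinkingPerm (insert (s, a (Fin.last q)) (E.erase (s, a (Fin.last q) - 1)))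
        (Function.update a (Fin.last q) (a (Fin.last q) - 1)) b τ →
      signValue i b τ (insert (s, a (Fin.last q)) (E.erase (s, a (Fin.last q) - 1)))
          (srcSet (Function.update a (Fin.last q) (a (Fin.last q) - 1))) (srcSet b)
        = - signValue i b σ E (srcSet a) (srcSet b) := by
  obtain ⟨hF, htb⟩ := hE
  set A := srcSet a with hA
  set B := srcSet b with hB
  set aq := a (Fin.last q) with haqdef
  set E' := insert (s, aq) (E.erase (s, aq - 1)) with hE'
  set a' := Function.update a (Fin.last q) (aq - 1) with ha'def
  set A' := srcSet a' with hA'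
  have hlt := hF.edge_lt
  have hsa : s < aq - 1 := hF.edge_lt _ hs
  have hmemA : ∀ k, a k ∈ A := fun k => mem_image.mpr ⟨k, mem_univ k, rfl⟩
  have hmemB : ∀ k, b k ∈ B := fun k => mem_image.mpr ⟨k, mem_univ k, rfl⟩
  have hAi : ∀ x ∈ A, x ≤ i := by
    intro x hx; obtain ⟨k, _, hk⟩ := mem_image.mp hx; rw [← hk]; exact hai k
  have hBi : ∀ x ∈ B, i < x := by
    intro x hx; obtain ⟨k, _, hk⟩ := mem_image.mp hx; rw [← hk]; exact hbi k
  have haqi : aq ≤ i := hai _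
  have htr' := htr
  rw [IsTransitPoint, transitSet, mem_sdiff, mem_union] at htr'
  have hm1nA : aq - 1 ∉ A := fun h => htr'.2 (mem_union_left _ h)
  have hm1nB : aq - 1 ∉ B := fun h => htr'.2 (mem_union_right _ h)
  -- degree bounds
  have hdegOut : ∀ x, (beginsAt E x).card ≤ 1 := by
    intro x
    by_cases hxA : x ∈ A
    · rw [hF.source_out x hxA]
    · by_cases hxB : x ∈ B
      · rw [hF.sink_out x hxB]; simp
      · rcases hF.transit x hxA hxB with ⟨h1, _⟩ | ⟨h1, _⟩
        · rw [h1]; simp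
        · rw [h1]
  have hdegIn : ∀ x, (endsAt E x).card ≤ 1 := by
    intro x
    by_cases hxA : x ∈ A
    · rw [hF.source_in x hxA]; simp
    · by_cases hxB : x ∈ B
      · rw [hF.sink_in x hxB]
      · rcases hF.transit x hxA hxB with ⟨_, h1⟩ | ⟨_, h1⟩
        · rw [h1]; simp
        · rw [h1]
  have hbegsE : ∀ e ∈ beginsAt E s, e = (s, aq - 1) :=
    fun e he => Finset.card_le_one.mp (hdegOut s) e he _ (mem_filter.mpr ⟨hs, rfl⟩)
  have hendm1 : ∀ e ∈ endsAt E (aq - 1), e = (s, aq - 1) :=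
    fun e he => Finset.card_le_one.mp (hdegIn (aq - 1)) e he _ (mem_filter.mpr ⟨hs, rfl⟩)
  have haqA : aq ∈ A := hmemA _
  have hendaqE : endsAt E aq = ∅ := hF.source_in _ haqA
  have he1notE : (s, aq) ∉ E := by
    intro h
    have h2 : (s, aq) ∈ endsAt E aq := mem_filter.mpr ⟨h, rfl⟩
    rw [hendaqE] at h2
    exact notMem_empty _ h2
  have hcardE : 1 ≤ E.card := card_pos.mpr ⟨_, hs⟩
  have hcard' : E'.card = E.card := by
    rw [hE', card_insert_of_notMem (fun h => he1notE (mem_of_mem_erase h)),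
      card_erase_of_mem hs]
    omega
  have hmemE' : ∀ e : ℤ × ℤ, e ∈ E' ↔ (e = (s, aq) ∨ (e ∈ E ∧ e ≠ (s, aq - 1))) := by
    intro e
    rw [hE', mem_insert, mem_erase]
    tauto
  -- beginsAt / endsAt of E'
  have hbeg'ne : ∀ x : ℤ, x ≠ s → beginsAt E' x = beginsAt E x := by
    intro x hx; rw [hE']; exact Walk.beginsAt_surg_ne x hx
  have hbegm1card : (beginsAt E (aq - 1)).card = 1 := by
    rcases hF.transit _ hm1nA hm1nB with ⟨_, h1⟩ | ⟨h1, _⟩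
    · exfalso
      have : (s, aq - 1) ∈ endsAt E (aq - 1) := mem_filter.mpr ⟨hs, rfl⟩
      rw [h1] at this
      exact notMem_empty _ this
    · exact h1
  have hbegs' : beginsAt E' s = {(s, aq)} := by
    ext e
    simp only [beginsAt, mem_filter, mem_singleton]
    constructor
    · rintro ⟨he, h1⟩
      rcases (hmemE' e).mp he with h2 | ⟨h2, h3⟩
      · exact h2
      · exact absurd (hbegsE e (mem_filter.mpr ⟨h2, h1⟩)) h3
    · rintro rfl
      exact ⟨(hmemE' _).mpr (Or.inl rfl), rfl⟩
  have hbegcard' : ∀ x, (beginsAt E' x).card = (beginsAt E x).card := by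
    intro x
    by_cases hx : x = s
    · subst hx
      rw [hbegs', card_singleton]
      have h1 : 1 ≤ (beginsAt E x).card :=
        card_pos.mpr ⟨_, mem_filter.mpr ⟨hs, rfl⟩⟩
      have h2 := hdegOut x
      omega
    · rw [hbeg'ne x hx]
  have hdegOut' : ∀ x, (beginsAt E' x).card ≤ 1 := by
    intro x; rw [hbegcard']; exact hdegOut x
  have hend'ne : ∀ x : ℤ, x ≠ aq - 1 → x ≠ aq → endsAt E' x = endsAt E x := by
    intro x h1 h2
    ext e
    simp only [endsAt, mem_filter]
    constructor
    · rintro ⟨he, hx⟩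
      rcases (hmemE' e).mp he with h3 | ⟨h3, _⟩
      · exfalso; rw [h3] at hx; exact h2 (by simpa using hx.symm)
      · exact ⟨h3, hx⟩
    · rintro ⟨he, hx⟩
      refine ⟨(hmemE' e).mpr (Or.inr ⟨he, ?_⟩), hx⟩
      intro heq
      rw [heq] at hx
      exact h1 (by simpa using hx.symm)
  have hendm1' : endsAt E' (aq - 1) = ∅ := by
    rw [eq_empty_iff_forall_notMem]
    intro e he
    rw [endsAt, mem_filter] at he
    rcases (hmemE' e).mp he.1 with h2 | ⟨h2, h3⟩
    · rw [h2] at he; have := he.2; simp at this; omega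
    · exact h3 (hendm1 e (mem_filter.mpr ⟨h2, he.2⟩))
  have hendaq' : endsAt E' aq = {(s, aq)} := by
    ext e
    simp only [endsAt, mem_filter, mem_singleton]
    constructor
    · rintro ⟨he, hx⟩
      rcases (hmemE' e).mp he with h2 | ⟨h2, _⟩
      · exact h2
      · exfalso
        have : e ∈ endsAt E aq := mem_filter.mpr ⟨h2, hx⟩
        rw [hendaqE] at this
        exact notMem_empty _ this
    · rintro rfl
      exact ⟨(hmemE' _).mpr (Or.inl rfl), rfl⟩
  have hlt' : ∀ e ∈ E', e.1 < e.2 := by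
    intro e he
    rcases (hmemE' e).mp he with h1 | ⟨h1, _⟩
    · rw [h1]; simp; omega
    · exact hlt e h1
  -- membership in A'
  have hmemA'iff : ∀ x : ℤ, x ∈ A' ↔ (x = aq - 1 ∨ ∃ k, k ≠ Fin.last q ∧ x = a k) := by
    intro x
    rw [hA', srcSet]
    simp only [mem_image, mem_univ, true_and]
    constructor
    · rintro ⟨k, hk⟩
      by_cases hkl : k = Fin.last q
      · subst hkl
        rw [ha'def, Function.update_self] at hk
        exact Or.inl hk.symm
      · rw [ha'def, Function.update_of_ne hkl] at hk
        exact Or.inr ⟨k, hkl, hk.symm⟩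
    · rintro (rfl | ⟨k, hkl, rfl⟩)
      · exact ⟨Fin.last q, by rw [ha'def, Function.update_self]⟩
      · exact ⟨k, by rw [ha'def, Function.update_of_ne hkl]⟩
  have hm1A' : aq - 1 ∈ A' := (hmemA'iff _).mpr (Or.inl rfl)
  have hA'i : ∀ x ∈ A', x ≤ i := by
    intro x hx
    rcases (hmemA'iff x).mp hx with rfl | ⟨k, _, rfl⟩
    · omega
    · exact hai k
  have hdisj' : Disjoint A' B := by
    rw [disjoint_left]
    intro x hx hxB
    have := hA'i x hx
    have := hBi x hxB
    omega
  have hbneS : ∀ m : Fin (q+1), b m ≠ s := by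
    intro m h; have := hbi m; omega
  have hbneAq : ∀ m : Fin (q+1), b m ≠ aq := by
    intro m h; have := hbi m; omega
  have hbneAq1 : ∀ m : Fin (q+1), b m ≠ aq - 1 := by
    intro m h; have := hbi m; omega
  have haknAq1 : ∀ k, a k ≠ aq - 1 := by
    intro k h; exact hm1nA (h ▸ hmemA k)
  have hakltAq : ∀ k, k ≠ Fin.last q → a k < aq := by
    intro k hk
    exact ha (Fin.lt_last_iff_ne_last.mpr hk)
  -- vertex set equality
  have hVgen : ∀ (G : FlowGraph) (x : ℤ),
      x ∈ (G.image Prod.fst ∪ G.image Prod.snd) ↔ ∃ e ∈ G, e.1 = x ∨ e.2 = x := by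
    intro G x
    simp only [mem_union, mem_image]
    constructor
    · rintro (⟨e, he, hx⟩ | ⟨e, he, hx⟩)
      · exact ⟨e, he, Or.inl hx⟩
      · exact ⟨e, he, Or.inr hx⟩
    · rintro ⟨e, he, hx | hx⟩
      · exact Or.inl ⟨e, he, hx⟩
      · exact Or.inr ⟨e, he, hx⟩
  obtain ⟨eaq, heaqE, heaq1⟩ : ∃ e ∈ E, e.1 = aq := by
    have h1 : 0 < (beginsAt E aq).card := by rw [hF.source_out _ haqA]; omega
    obtain ⟨e, he⟩ := card_pos.mp h1
    rw [beginsAt, mem_filter] at he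
    exact ⟨e, he.1, he.2⟩
  obtain ⟨em1, hem1E, hem1⟩ : ∃ e ∈ E, e.1 = aq - 1 := by
    have h1 : 0 < (beginsAt E (aq - 1)).card := by omega
    obtain ⟨e, he⟩ := card_pos.mp h1
    rw [beginsAt, mem_filter] at he
    exact ⟨e, he.1, he.2⟩
  have hem1ne : em1 ≠ (s, aq - 1) := by
    intro h; rw [h] at hem1; simp at hem1; omega
  have hem1E' : em1 ∈ E' := (hmemE' _).mpr (Or.inr ⟨hem1E, hem1ne⟩)
  have heaqne : eaq ≠ (s, aq - 1) := by
    intro h; rw [h] at heaq1; simp at heaq1; omega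
  have heaqE' : eaq ∈ E' := (hmemE' _).mpr (Or.inr ⟨heaqE, heaqne⟩)
  have hVeq : (E'.image Prod.fst ∪ E'.image Prod.snd) = (E.image Prod.fst ∪ E.image Prod.snd) := by
    ext x
    rw [hVgen, hVgen]
    constructor
    · rintro ⟨e, he, hx⟩
      rcases (hmemE' e).mp he with rfl | ⟨h2, _⟩
      · rcases hx with hx | hx
        · exact ⟨(s, aq - 1), hs, Or.inl hx⟩
        · exact ⟨eaq, heaqE, Or.inl (heaq1.trans hx)⟩
      · exact ⟨e, h2, hx⟩
    · rintro ⟨e, he, hx⟩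
      by_cases h0 : e = (s, aq - 1)
      · subst h0
        rcases hx with hx | hx
        · exact ⟨(s, aq), (hmemE' _).mpr (Or.inl rfl), Or.inl hx⟩
        · exact ⟨em1, hem1E', Or.inl (hem1.trans hx)⟩
      · exact ⟨e, (hmemE' _).mpr (Or.inr ⟨he, h0⟩), hx⟩
  have haqnA' : aq ∉ A' := by
    intro h
    rcases (hmemA'iff _).mp h with h1 | ⟨k, hk, h1⟩
    · omega
    · exact hk (ha.injective h1.symm)
  have haqnB : aq ∉ B := by
    intro h; have := hBi _ h; omega
  have hTeq : transitSet E' A' B = insert aq ((transitSet E A B).erase (aq - 1)) := by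
    ext x
    rw [transitSet, transitSet, hVeq]
    simp only [mem_sdiff, mem_union, mem_insert, mem_erase]
    constructor
    · rintro ⟨hxV, hxn⟩
      by_cases hxaq : x = aq
      · exact Or.inl hxaq
      · refine Or.inr ⟨?_, hxV, ?_⟩
        · intro h; rw [h] at hxn; exact hxn (Or.inl hm1A')
        · rintro (hxA | hxB)
          · rcases mem_image.mp hxA with ⟨k, _, hk⟩
            by_cases hkl : k = Fin.last q
            · rw [hkl] at hk; exact hxaq hk.symm
            · exact hxn (Or.inl ((hmemA'iff x).mpr (Or.inr ⟨k, hkl, hk.symm⟩)))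
          · exact hxn (Or.inr hxB)
    · rintro (rfl | ⟨hne, hxV, hxn⟩)
      · refine ⟨mem_union.mp ((hVgen E aq).mpr ⟨eaq, heaqE, Or.inl heaq1⟩), ?_⟩
        rintro (h | h)
        · exact haqnA' h
        · exact haqnB h
      · refine ⟨hxV, ?_⟩
        rintro (h | h)
        · rcases (hmemA'iff x).mp h with h1 | ⟨k, _, h1⟩
          · exact hne h1
          · exact hxn (Or.inl (h1 ▸ hmemA k))
        · exact hxn (Or.inr h)
  have hm1T : aq - 1 ∈ transitSet E A B := htr
  have haqnT : aq ∉ (transitSet E A B).erase (aq - 1) := by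
    intro h
    have h2 := mem_of_mem_erase h
    rw [transitSet, mem_sdiff] at h2
    exact h2.2 (mem_union_left _ haqA)
  have hTcard : (transitSet E' A' B).card = (transitSet E A B).card := by
    rw [hTeq, card_insert_of_notMem haqnT, card_erase_of_mem hm1T]
    have : 0 < (transitSet E A B).card := card_pos.mpr ⟨_, hm1T⟩
    omega
  constructor
  · -- InF
    refine ⟨⟨hlt', hdisj', ?_, ?_, ?_, ?_, ?_⟩, ?_⟩
    · -- source_out
      intro x hx
      rw [hbegcard']
      rcases (hmemA'iff x).mp hx with rfl | ⟨k, _, rfl⟩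
      · exact hbegm1card
      · exact hF.source_out _ (hmemA k)
    · -- source_in
      intro x hx
      rcases (hmemA'iff x).mp hx with rfl | ⟨k, hkl, rfl⟩
      · exact hendm1'
      · rw [hend'ne _ (haknAq1 k) (fun h => hkl (ha.injective h))]
        exact hF.source_in _ (hmemA k)
    · -- sink_in
      intro x hx
      obtain ⟨m, _, hm⟩ := mem_image.mp hx
      rw [hend'ne x (hm ▸ hbneAq1 m) (hm ▸ hbneAq m)]
      exact hF.sink_in _ hx
    · -- sink_out
      intro x hx
      obtain ⟨m, _, hm⟩ := mem_image.mp hx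
      rw [hbeg'ne x (hm ▸ hbneS m)]
      exact hF.sink_out _ hx
    · -- transit
      intro r hrA' hrB
      have hrm1 : r ≠ aq - 1 := fun h => hrA' (h ▸ hm1A')
      by_cases hraq : r = aq
      · subst hraq
        right
        constructor
        · rw [hbegcard']; exact hF.source_out _ haqA
        · rw [hendaq', card_singleton]
      · have hrA : r ∉ A := by
          intro h
          obtain ⟨k, _, hk⟩ := mem_image.mp h
          by_cases hkl : k = Fin.last q
          · exact hraq (hkl ▸ hk).symm
          · exact hrA' ((hmemA'iff r).mpr (Or.inr ⟨k, hkl, hk.symm⟩))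
        rw [hend'ne r hrm1 hraq]
        rcases hF.transit r hrA hrB with ⟨h1, h2⟩ | ⟨h1, h2⟩
        · left
          refine ⟨?_, h2⟩
          have := hbegcard' r
          rw [h1] at this
          simpa using card_eq_zero.mp (by simpa using this)
        · right
          rw [hbegcard']
          exact ⟨h1, h2⟩
    · -- transit bound
      intro r hr
      rw [IsTransitPoint, hTeq, mem_insert] at hr
      rcases hr with rfl | hr
      · exact haqi
      · exact htb r (mem_of_mem_erase hr)
  · -- sign part
    intro σ τ hσ hτ
    have hsinkB : ∀ m : Fin (q+1), Walk.sinkOf E (b m) = b m :=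
      fun m => Walk.sinkOf_of_empty (hF.sink_out _ (hmemB m))
    have hsig : ∀ k, Walk.sinkOf E (a k) = b (σ k) := fun k =>
      (Walk.sinkOf_linked hlt hdegOut (hσ k)).trans (hsinkB _)
    have hsinkB' : ∀ m : Fin (q+1), Walk.sinkOf E' (b m) = b m := fun m =>
      Walk.sinkOf_of_empty (by rw [hbeg'ne _ (hbneS m)]; exact hF.sink_out _ (hmemB m))
    have htau : ∀ k, Walk.sinkOf E' (a' k) = b (τ k) := fun k =>
      (Walk.sinkOf_linked hlt' hdegOut' (hτ k)).trans (hsinkB' _)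
    -- the source linked to s
    have hrle : Walk.srcOf E s ≤ s := Walk.srcOf_le hlt s
    have hrend : endsAt E (Walk.srcOf E s) = ∅ := Walk.endsAt_srcOf hlt s
    have hrbeg : (beginsAt E (Walk.srcOf E s)).Nonempty := by
      rcases Walk.srcOf_out_or_eq (E := E) s with h | ⟨w, hw⟩
      · rw [h]; exact ⟨(s, aq - 1), mem_filter.mpr ⟨hs, rfl⟩⟩
      · exact ⟨(Walk.srcOf E s, w), mem_filter.mpr ⟨hw, rfl⟩⟩
    have hrA : Walk.srcOf E s ∈ A := by
      by_contra hrA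
      by_cases hrB : Walk.srcOf E s ∈ B
      · rw [hF.sink_out _ hrB] at hrbeg
        exact not_nonempty_empty hrbeg
      · rcases hF.transit _ hrA hrB with ⟨h1, _⟩ | ⟨_, h2⟩
        · rw [h1] at hrbeg; exact not_nonempty_empty hrbeg
        · rw [hrend] at h2; simp at h2
    obtain ⟨j, _, hj⟩ := mem_image.mp hrA
    have hjne : j ≠ Fin.last q := by
      intro h
      rw [h, ← haqdef] at hj
      omega
    -- sinkOf E s = b (σ j)
    have hlinks : Walk.sinkOf E s = b (σ j) := by
      have h1 := Walk.sinkOf_linked hlt hdegOut (Walk.linked_srcOf (E := E) s)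
      rw [← hj] at h1
      rw [← h1, hsig j]
    -- sinkOf in E' agrees with E for x > s
    have hgt : ∀ x : ℤ, s < x → Walk.sinkOf E' x = Walk.sinkOf E x := by
      intro x hx
      rw [Walk.sinkOf, Walk.sinkOf, hcard', hE']
      apply Walk.followN_surg_of_not_hit
      intro m
      have := Walk.le_followN hlt m x
      omega
    -- tau at last
    have htaul : τ (Fin.last q) = σ j := by
      apply hb.injective
      rw [← htau, ← hlinks, ha'def, Function.update_self, hgt _ (by omega)]
      exact (Walk.sinkOf_edge hlt hdegOut hs).symm
    -- tau off j and last
    have hdich : ∀ k, k ≠ Fin.last q → k ≠ j → τ k = σ k := by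
      intro k hkl hkj
      have hak' : a' k = a k := Function.update_of_ne hkl _ _
      have hnothit : ∀ m, Walk.followN E m (a k) ≠ s := by
        intro m hm
        have h1 : Walk.srcOf E (a k) = Walk.srcOf E s := by
          rw [← hm]
          exact Walk.srcOf_linked hlt hdegIn (Walk.linked_followN m (a k))
        have h2 : Walk.srcOf E (a k) = a k :=
          Walk.srcOf_of_empty (hF.source_in _ (hmemA k))
        exact hkj (ha.injective (by rw [← h2, h1, hj]))
      apply hb.injective
      rw [← htau k, hak', ← hsig k]
      rw [Walk.sinkOf, Walk.sinkOf, hcard', hE']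
      exact Walk.followN_surg_of_not_hit _ hnothit
    -- tau = sigma * swap
    have hperm : τ = σ * Equiv.swap j (Fin.last q) := by
      apply perm_eq_off _ _ j
      intro k hk
      by_cases hkl : k = Fin.last q
      · subst hkl
        rw [htaul]
        simp [Equiv.Perm.mul_apply, Equiv.swap_apply_right]
      · rw [hdich k hkl hk]
        simp [Equiv.Perm.mul_apply, Equiv.swap_apply_of_ne_of_ne hk hkl]
    have hsign : (Equiv.Perm.sign τ : ℤ) = - (Equiv.Perm.sign σ : ℤ) := by
      rw [hperm, map_mul, Equiv.Perm.sign_swap hjne]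
      simp
    rw [signValue, signValue, hsign, hTcard]
    ring
end

section
/- Let q ≥ 1, Γ ∈ 𝓕_i(a_1,…,a_q; b_1,…,b_q), and suppose no edge of Γ begins at a_q − 1. Let L_2(Γ) be the graph obtained from Γ by adding the edge (a_q − 1, a_q). Then L_2(Γ) ∈ 𝓕_i(a_1,…,a_{q−1}, a_q − 1; b_1,…,b_q) and sgn_i(L_2(Γ)) = −sgn_i(Γ). -/
open Finset

-- reachability
def Reach (E : FlowGraph) (x y : ℤ) : Prop :=
  Relation.ReflTransGen (fun u v => (u, v) ∈ E) x y

lemma mem_beginsAt {E : FlowGraph} {r : ℤ} {e : ℤ × ℤ} :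
    e ∈ beginsAt E r ↔ e ∈ E ∧ e.1 = r := Finset.mem_filter

lemma mem_endsAt {E : FlowGraph} {r : ℤ} {e : ℤ × ℤ} :
    e ∈ endsAt E r ↔ e ∈ E ∧ e.2 = r := Finset.mem_filter

lemma right_unique {E : FlowGraph} {A B : Finset ℤ} (h : IsFlow E A B)
    {u v w : ℤ} (h1 : (u, v) ∈ E) (h2 : (u, w) ∈ E) : v = w := by
  have hv : (u, v) ∈ beginsAt E u := mem_beginsAt.2 ⟨h1, rfl⟩
  have hw : (u, w) ∈ beginsAt E u := mem_beginsAt.2 ⟨h2, rfl⟩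
  have hcard : (beginsAt E u).card ≤ 1 := by
    by_cases hA : u ∈ A
    · exact (h.source_out u hA).le
    by_cases hB : u ∈ B
    · simp [h.sink_out u hB]
    rcases h.transit u hA hB with ⟨h1', _⟩ | ⟨h1', _⟩
    · simp [h1']
    · exact h1'.le
  have := Finset.card_le_one.1 hcard _ hv _ hw
  exact congrArg Prod.snd this

lemma sink_no_out {E : FlowGraph} {A B : Finset ℤ} (h : IsFlow E A B)
    {s : ℤ} (hs : s ∈ B) {y : ℤ} (hy : (s, y) ∈ E) : False := by
  have := h.sink_out s hs
  have : (s, y) ∈ beginsAt E s := mem_beginsAt.2 ⟨hy, rfl⟩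
  simp [h.sink_out s hs] at this

lemma exists_sink {E : FlowGraph} {A B : Finset ℤ} (h : IsFlow E A B) :
    ∀ n : ℕ, ∀ x : ℤ, (E.filter fun e => x < e.2).card ≤ n →
      ((∃ y, (x, y) ∈ E) ∨ x ∈ B) → ∃ s ∈ B, Reach E x s := by
  intro n
  induction n with
  | zero =>
    intro x hc hx
    rcases hx with ⟨y, hy⟩ | hx
    · exfalso
      have : (x, y) ∈ E.filter fun e => x < e.2 :=
        Finset.mem_filter.2 ⟨hy, h.edge_lt _ hy⟩
      have := Finset.card_pos.2 ⟨_, this⟩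
      omega
    · exact ⟨x, hx, Relation.ReflTransGen.refl⟩
  | succ n ih =>
    intro x hc hx
    rcases hx with ⟨y, hy⟩ | hx
    · -- step to y
      have hxy : x < y := h.edge_lt _ hy
      have hsub : (E.filter fun e => y < e.2) ⊆ (E.filter fun e => x < e.2).erase (x, y) := by
        intro e he
        rcases Finset.mem_filter.1 he with ⟨heE, hey⟩
        refine Finset.mem_erase.2 ⟨?_, Finset.mem_filter.2 ⟨heE, by omega⟩⟩
        intro hcontra
        rw [hcontra] at hey
        simp at hey
      have hmemxy : (x, y) ∈ E.filter fun e => x < e.2 := Finset.mem_filter.2 ⟨hy, hxy⟩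
      have hcy : (E.filter fun e => y < e.2).card ≤ n := by
        have := Finset.card_le_card hsub
        have := Finset.card_erase_of_mem hmemxy
        have hpos := Finset.card_pos.2 ⟨_, hmemxy⟩
        omega
      have hynA : y ∉ A := by
        intro hyA
        have := h.source_in y hyA
        have : (x, y) ∈ endsAt E y := mem_endsAt.2 ⟨hy, rfl⟩
        simp [h.source_in y hyA] at this
      have hy' : (∃ z, (y, z) ∈ E) ∨ y ∈ B := by
        by_cases hyB : y ∈ B
        · exact Or.inr hyB
        rcases h.transit y hynA hyB with ⟨_, h2⟩ | ⟨h1, _⟩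
        · exfalso
          have : (x, y) ∈ endsAt E y := mem_endsAt.2 ⟨hy, rfl⟩
          simp [h2] at this
        · left
          rcases Finset.card_pos.1 (by omega : 0 < (beginsAt E y).card) with ⟨e, he⟩
          rcases mem_beginsAt.1 he with ⟨heE, he1⟩
          refine ⟨e.2, ?_⟩
          have : e = (y, e.2) := by rw [← he1]
          rwa [this] at heE
      rcases ih y hcy hy' with ⟨s, hsB, hreach⟩
      exact ⟨s, hsB, Relation.ReflTransGen.head hy hreach⟩
    · exact ⟨x, hx, Relation.ReflTransGen.refl⟩

lemma reach_total {E : FlowGraph} {A B : Finset ℤ} (h : IsFlow E A B)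
    {x s t : ℤ} (hs : Reach E x s) (ht : Reach E x t) : Reach E s t ∨ Reach E t s := by
  induction hs with
  | refl => exact Or.inl ht
  | tail hxz hzs ih =>
    rename_i z s'
    rcases ih with hzt | htz
    · rcases Relation.ReflTransGen.cases_head hzt with rfl | ⟨w, hzw, hwt⟩
      · exact Or.inr (Relation.ReflTransGen.single hzs)
      · have : s' = w := right_unique h hzs hzw
        subst this
        exact Or.inl hwt
    · exact Or.inr (htz.tail hzs)

lemma sink_unique {E : FlowGraph} {A B : Finset ℤ} (h : IsFlow E A B)
    {x s t : ℤ} (hsB : s ∈ B) (htB : t ∈ B) (hs : Reach E x s) (ht : Reach E x t) : s = t := by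
  rcases reach_total h hs ht with hst | hts
  · rcases Relation.ReflTransGen.cases_head hst with rfl | ⟨w, hsw, _⟩
    · rfl
    · exact absurd hsw (fun hw => sink_no_out h hsB hw)
  · rcases Relation.ReflTransGen.cases_head hts with rfl | ⟨w, htw, _⟩
    · rfl
    · exact absurd htw (fun hw => sink_no_out h htB hw)

/-- a vertex meeting an edge reaches a sink -/
lemma vertex_sink {E : FlowGraph} {A B : Finset ℤ} (h : IsFlow E A B)
    {z y : ℤ} (hzy : (z, y) ∈ E ∨ (y, z) ∈ E) : ∃ s ∈ B, Reach E z s := by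
  apply exists_sink h (E.filter fun e => z < e.2).card z le_rfl
  rcases hzy with hzy | hyz
  · exact Or.inl ⟨y, hzy⟩
  · by_cases hzB : z ∈ B
    · exact Or.inr hzB
    have hznA : z ∉ A := by
      intro hzA
      have : (y, z) ∈ endsAt E z := mem_endsAt.2 ⟨hyz, rfl⟩
      simp [h.source_in z hzA] at this
    rcases h.transit z hznA hzB with ⟨_, h2⟩ | ⟨h1, _⟩
    · exfalso
      have : (y, z) ∈ endsAt E z := mem_endsAt.2 ⟨hyz, rfl⟩
      simp [h2] at this
    · left
      rcases Finset.card_pos.1 (by omega : 0 < (beginsAt E z).card) with ⟨e, he⟩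
      rcases mem_beginsAt.1 he with ⟨heE, he1⟩
      refine ⟨e.2, ?_⟩
      have : e = (z, e.2) := by rw [← he1]
      rwa [this] at heE

lemma step_sink {E : FlowGraph} {A B : Finset ℤ} (h : IsFlow E A B)
    {z y s t : ℤ} (hzy : (z, y) ∈ E ∨ (y, z) ∈ E) (hsB : s ∈ B) (htB : t ∈ B)
    (hzs : Reach E z s) (hyt : Reach E y t) : s = t := by
  rcases hzy with hzy | hyz
  · rcases Relation.ReflTransGen.cases_head hzs with rfl | ⟨w, hzw, hws⟩
    · exact absurd hzy (fun hw => sink_no_out h hsB hw)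
    · have : y = w := right_unique h hzy hzw
      subst this
      exact sink_unique h hsB htB hws hyt
  · exact sink_unique h hsB htB (Relation.ReflTransGen.head hyz hzs) hyt

lemma linked_sink {E : FlowGraph} {A B : Finset ℤ} (h : IsFlow E A B)
    {x y : ℤ} (hxy : Linked E x y) :
    ∀ s t : ℤ, s ∈ B → t ∈ B → Reach E x s → Reach E y t → s = t := by
  induction hxy with
  | refl => exact fun s t hsB htB hxs hyt => sink_unique h hsB htB hxs hyt
  | @tail z y' hxz hzy ih =>
    intro s t hsB htB hxs hyt
    rcases vertex_sink h hzy with ⟨s', hs'B, hzs'⟩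
    have h1 : s = s' := ih s s' hsB hs'B hxs hzs'
    have h2 : s' = t := step_sink h hzy hs'B htB hzs' hyt
    omega

lemma sinks_linked_eq {E : FlowGraph} {A B : Finset ℤ} (h : IsFlow E A B)
    {x y : ℤ} (hxB : x ∈ B) (hyB : y ∈ B) (hxy : Linked E x y) : x = y :=
  linked_sink h hxy x y hxB hyB Relation.ReflTransGen.refl Relation.ReflTransGen.refl

/-- collapsing a pendant vertex `p` (meeting no edge of `E`) onto `c`:
links in `insert (p, c) E` map to links in `E`. -/
lemma linked_collapse {E : FlowGraph} {p c : ℤ} (hpc : p ≠ c)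
    (hp1 : ∀ e ∈ E, e.1 ≠ p) (hp2 : ∀ e ∈ E, e.2 ≠ p)
    {x y : ℤ} (hxy : Linked (insert (p, c) E) x y) :
    Linked E (if x = p then c else x) (if y = p then c else y) := by
  induction hxy with
  | refl => exact Relation.ReflTransGen.refl
  | @tail z y' hxz hzy ih =>
    refine ih.trans ?_
    rcases hzy with hzy | hyz
    · rcases Finset.mem_insert.1 hzy with heq | hE
      · have hz : z = p := (Prod.ext_iff.1 heq).1
        have hy : y' = c := (Prod.ext_iff.1 heq).2
        subst hz; subst hy
        simp only [if_pos rfl, if_neg (Ne.symm hpc)]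
        exact Relation.ReflTransGen.refl
      · have hz : z ≠ p := hp1 _ hE
        have hy : y' ≠ p := hp2 _ hE
        simp only [if_neg hz, if_neg hy]
        exact Relation.ReflTransGen.single (Or.inl hE)
    · rcases Finset.mem_insert.1 hyz with heq | hE
      · have hy : y' = p := (Prod.ext_iff.1 heq).1
        have hz : z = c := (Prod.ext_iff.1 heq).2
        subst hy; subst hz
        simp only [if_pos rfl, if_neg (Ne.symm hpc)]
        exact Relation.ReflTransGen.refl
      · have hz : z ≠ p := hp2 _ hE
        have hy : y' ≠ p := hp1 _ hE
        simp only [if_neg hz, if_neg hy]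
        exact Relation.ReflTransGen.single (Or.inr hE)

/-- Lemma 13: if no edge of `Γ ∈ 𝓕_i(a_1,…,a_q; b_1,…,b_q)` begins at `a_q - 1`,
then `L_2(Γ)` (adding the edge `(a_q - 1, a_q)`) belongs to
`𝓕_i(a_1,…,a_{q-1}, a_q - 1; b_1,…,b_q)` and has `i`-sign opposite to that of `Γ`. -/
theorem statement2 {q : ℕ} (i : ℤ) (a b : Fin (q + 1) → ℤ)
    (ha : StrictMono a) (hb : StrictAnti b)
    (hai : ∀ j, a j ≤ i) (hbi : ∀ j, i < b j)
    (E : FlowGraph) (hE : InF i a b E)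
    (hno : ∀ e ∈ E, e.1 ≠ a (Fin.last q) - 1) :
    InF i (Function.update a (Fin.last q) (a (Fin.last q) - 1)) b
      (insert (a (Fin.last q) - 1, a (Fin.last q)) E) ∧
    ∀ σ τ : Equiv.Perm (Fin (q + 1)),
      IsLinkingPerm E a b σ →
      IsLinkingPerm (insert (a (Fin.last q) - 1, a (Fin.last q)) E)
        (Function.update a (Fin.last q) (a (Fin.last q) - 1)) b τ →
      signValue i b τ (insert (a (Fin.last q) - 1, a (Fin.last q)) E)
          (srcSet (Function.update a (Fin.last q) (a (Fin.last q) - 1))) (srcSet b)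
        = - signValue i b σ E (srcSet a) (srcSet b) := by
  obtain ⟨hflow, htb⟩ := hE
  set α : ℤ := a (Fin.last q) with hαdef
  set p : ℤ := α - 1 with hpdef
  set a' : Fin (q + 1) → ℤ := Function.update a (Fin.last q) p with ha'def
  have hαle : α ≤ i := hai _
  have hpα : p ≠ α := by omega
  have haA : ∀ j, a j ∈ srcSet a := fun j => Finset.mem_image.2 ⟨j, Finset.mem_univ _, rfl⟩
  have hbB : ∀ j, b j ∈ srcSet b := fun j => Finset.mem_image.2 ⟨j, Finset.mem_univ _, rfl⟩
  have ha'last : a' (Fin.last q) = p := Function.update_self _ _ _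
  have ha'ne : ∀ j, j ≠ Fin.last q → a' j = a j := fun j hj => Function.update_of_ne hj _ _
  have ha'A' : ∀ j, a' j ∈ srcSet a' := fun j => Finset.mem_image.2 ⟨j, Finset.mem_univ _, rfl⟩
  have hpA' : p ∈ srcSet a' := ha'last ▸ ha'A' (Fin.last q)
  have hmemA : ∀ x : ℤ, x ∈ srcSet a ↔ ∃ j, a j = x := by
    intro x; simp [srcSet]
  have hmemA' : ∀ x : ℤ, x ∈ srcSet a' ↔ ∃ j, a' j = x := by
    intro x; simp [srcSet]
  have hmemB : ∀ x : ℤ, x ∈ srcSet b ↔ ∃ j, b j = x := by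
    intro x; simp [srcSet]
  -- no source equals p
  have hane : ∀ j, a j ≠ p := by
    intro j
    have hcard := hflow.source_out _ (haA j)
    have hpos : 0 < (beginsAt E (a j)).card := by omega
    obtain ⟨e, he⟩ := Finset.card_pos.1 hpos
    obtain ⟨heE, he1⟩ := mem_beginsAt.1 he
    intro hcontra
    exact hno e heE (by rw [he1, hcontra])
  have hpnotA : p ∉ srcSet a := by
    rw [hmemA]; rintro ⟨j, hj⟩; exact hane j hj
  have hpnotB : p ∉ srcSet b := by
    rw [hmemB]; rintro ⟨j, hj⟩; have := hbi j; omega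
  have hαnotB : α ∉ srcSet b := by
    rw [hmemB]; rintro ⟨j, hj⟩; have := hbi j; omega
  have haltα : ∀ j, j ≠ Fin.last q → a j < α := by
    intro j hj
    exact ha (lt_of_le_of_ne (Fin.le_last j) hj)
  have hαnotA' : α ∉ srcSet a' := by
    rw [hmemA']; rintro ⟨j, hj⟩
    by_cases hjl : j = Fin.last q
    · rw [hjl, ha'last] at hj; omega
    · rw [ha'ne j hjl] at hj; have := haltα j hjl; omega
  -- p meets no edge of E
  have hp1 : ∀ e ∈ E, e.1 ≠ p := hno
  have hbeginsEp : beginsAt E p = ∅ := by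
    rw [Finset.eq_empty_iff_forall_notMem]
    intro e he
    obtain ⟨heE, he1⟩ := mem_beginsAt.1 he
    exact hp1 e heE he1
  have hendsEp : endsAt E p = ∅ := by
    rcases hflow.transit p hpnotA hpnotB with ⟨_, h2⟩ | ⟨h1, _⟩
    · exact h2
    · rw [hbeginsEp] at h1; simp at h1
  have hp2 : ∀ e ∈ E, e.2 ≠ p := by
    intro e he hcontra
    have : e ∈ endsAt E p := mem_endsAt.2 ⟨he, hcontra⟩
    rw [hendsEp] at this; exact absurd this (Finset.notMem_empty _)
  -- degree computations in E' = insert (p, α) E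
  have hbegins_ne : ∀ r : ℤ, r ≠ p → beginsAt (insert (p, α) E) r = beginsAt E r := by
    intro r hr
    rw [beginsAt, Finset.filter_insert, if_neg (by simpa using hr.symm)]
    rfl
  have hbegins_p : beginsAt (insert (p, α) E) p = {(p, α)} := by
    rw [beginsAt, Finset.filter_insert, if_pos rfl]
    rw [show E.filter (fun e => e.1 = p) = beginsAt E p from rfl, hbeginsEp]
    rfl
  have hends_ne : ∀ r : ℤ, r ≠ α → endsAt (insert (p, α) E) r = endsAt E r := by
    intro r hr
    rw [endsAt, Finset.filter_insert, if_neg (by simpa using hr.symm)]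
    rfl
  have hendsEα : endsAt E α = ∅ := hflow.source_in α (haA (Fin.last q))
  have hends_α : endsAt (insert (p, α) E) α = {(p, α)} := by
    rw [endsAt, Finset.filter_insert, if_pos rfl]
    rw [show E.filter (fun e => e.2 = α) = endsAt E α from rfl, hendsEα]
    rfl
  have hA'le : ∀ x ∈ srcSet a', x ≤ i := by
    intro x hx
    obtain ⟨j, hj⟩ := (hmemA' x).1 hx
    by_cases hjl : j = Fin.last q
    · rw [hjl, ha'last] at hj; omega
    · rw [ha'ne j hjl] at hj; have := hai j; omega
  have hAnotA' : ∀ x, x ∈ srcSet a → x ≠ α → x ∈ srcSet a' := by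
    intro x hx hxα
    obtain ⟨j, hj⟩ := (hmemA x).1 hx
    have hjl : j ≠ Fin.last q := by rintro rfl; exact hxα hj.symm
    exact (hmemA' x).2 ⟨j, by rw [ha'ne j hjl]; exact hj⟩
  have hA'notA : ∀ x, x ∈ srcSet a' → x ≠ p → x ∈ srcSet a := by
    intro x hx hxp
    obtain ⟨j, hj⟩ := (hmemA' x).1 hx
    have hjl : j ≠ Fin.last q := by
      rintro rfl; rw [ha'last] at hj; exact hxp hj.symm
    exact (hmemA x).2 ⟨j, by rw [← ha'ne j hjl]; exact hj⟩
  -- the new graph is a flow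
  have hflow' : IsFlow (insert (p, α) E) (srcSet a') (srcSet b) := by
    constructor
    · intro e he
      rcases Finset.mem_insert.1 he with rfl | heE
      · simp; omega
      · exact hflow.edge_lt e heE
    · rw [Finset.disjoint_left]
      intro x hx hx'
      obtain ⟨j, hj⟩ := (hmemB x).1 hx'
      have := hA'le x hx
      have := hbi j
      omega
    · intro x hx
      by_cases hxp : x = p
      · rw [hxp, hbegins_p]; rfl
      · rw [hbegins_ne x hxp]
        exact hflow.source_out x (hA'notA x hx hxp)
    · intro x hx
      have hxα : x ≠ α := by
        intro hcontra; rw [hcontra] at hx; exact hαnotA' hx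
      rw [hends_ne x hxα]
      by_cases hxp : x = p
      · rw [hxp]; exact hendsEp
      · exact hflow.source_in x (hA'notA x hx hxp)
    · intro x hx
      have hxα : x ≠ α := by
        intro hcontra; rw [hcontra] at hx; exact hαnotB hx
      rw [hends_ne x hxα]
      exact hflow.sink_in x hx
    · intro x hx
      have hxp : x ≠ p := by
        intro hcontra; rw [hcontra] at hx; exact hpnotB hx
      rw [hbegins_ne x hxp]
      exact hflow.sink_out x hx
    · intro r hrA' hrB
      have hrp : r ≠ p := fun hc => hrA' (hc ▸ hpA')
      by_cases hrα : r = α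
      · right
        rw [hrα, hends_α, hbegins_ne α (by omega)]
        exact ⟨hflow.source_out α (haA (Fin.last q)), rfl⟩
      · rw [hbegins_ne r hrp, hends_ne r hrα]
        have hrA : r ∉ srcSet a := by
          intro hrA
          exact hrA' (hAnotA' r hrA hrα)
        exact hflow.transit r hrA hrB
  -- transit set of the new graph
  have hαT : α ∉ transitSet E (srcSet a) (srcSet b) := by
    rw [transitSet, Finset.mem_sdiff]
    rintro ⟨-, h2⟩
    exact h2 (Finset.mem_union_left _ (haA (Fin.last q)))
  have hT : transitSet (insert (p, α) E) (srcSet a') (srcSet b)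
      = insert α (transitSet E (srcSet a) (srcSet b)) := by
    ext r
    simp only [transitSet, Finset.mem_sdiff, Finset.mem_union, Finset.mem_insert,
      Finset.image_insert, Finset.mem_image]
    constructor
    · rintro ⟨hvert, hnot⟩
      push_neg at hnot
      by_cases hrα : r = α
      · exact Or.inl hrα
      right
      have hrp : r ≠ p := fun hc => hnot.1 (hc ▸ hpA')
      have hrA : r ∉ srcSet a := fun hrA => hnot.1 (hAnotA' r hrA hrα)
      refine ⟨?_, ?_⟩
      · rcases hvert with h | h
        · rcases h with h | ⟨e, heE, he1⟩
          · exact absurd h hrp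
          · exact Or.inl ⟨e, heE, he1⟩
        · rcases h with h | ⟨e, heE, he2⟩
          · exact absurd h hrα
          · exact Or.inr ⟨e, heE, he2⟩
      · push_neg
        exact ⟨hrA, hnot.2⟩
    · rintro (rfl | ⟨hvert, hnot⟩)
      · refine ⟨Or.inr (Or.inl rfl), ?_⟩
        push_neg
        exact ⟨hαnotA', hαnotB⟩
      · push_neg at hnot
        have hrp : r ≠ p := by
          rintro rfl
          rcases hvert with ⟨e, heE, he1⟩ | ⟨e, heE, he2⟩
          · exact hp1 e heE he1
          · exact hp2 e heE he2
        refine ⟨?_, ?_⟩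
        · rcases hvert with ⟨e, heE, he1⟩ | ⟨e, heE, he2⟩
          · exact Or.inl (Or.inr ⟨e, heE, he1⟩)
          · exact Or.inr (Or.inr ⟨e, heE, he2⟩)
        · push_neg
          refine ⟨fun hrA' => hnot.1 (hA'notA r hrA' hrp), hnot.2⟩
  refine ⟨⟨hflow', ?_⟩, ?_⟩
  · intro r hr
    rw [IsTransitPoint, hT, Finset.mem_insert] at hr
    rcases hr with rfl | hr
    · exact hαle
    · exact htb r hr
  · intro σ τ hσ hτ
    have hsymm : Symmetric (fun u v => (u, v) ∈ E ∨ (v, u) ∈ E) :=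
      fun u v h => h.symm
    have key : ∀ j, b (τ j) = b (σ j) := by
      intro j
      have hlink := linked_collapse hpα hp1 hp2 (hτ j)
      have hbne : b (τ j) ≠ p := by have := hbi (τ j); omega
      rw [if_neg hbne] at hlink
      have hlink2 : Linked E (a j) (b (τ j)) := by
        by_cases hjl : j = Fin.last q
        · rw [hjl, ha'last, if_pos rfl] at hlink
          rw [hjl]
          exact hlink
        · rw [ha'ne j hjl, if_neg (hane j)] at hlink
          exact hlink
      have hlink3 : Linked E (b (σ j)) (b (τ j)) :=
        Relation.ReflTransGen.trans ((@Relation.ReflTransGen.stdSymm _ _ ⟨fun _ _ h => hsymm h⟩).symm _ _ (hσ j)) hlink2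
      exact (sinks_linked_eq hflow (hbB (σ j)) (hbB (τ j)) hlink3).symm
    have hστ : τ = σ := Equiv.ext fun j => hb.injective (key j)
    rw [signValue, signValue, hστ, hT, Finset.card_insert_of_notMem hαT]
    rw [show (∑ j, (b j - i)).toNat + ((transitSet E (srcSet a) (srcSet b)).card + 1)
        = ((∑ j, (b j - i)).toNat + (transitSet E (srcSet a) (srcSet b)).card) + 1 by omega]
    rw [pow_succ]
    ring
end

section
/- Let q ≥ 1, Γ ∈ 𝓕_i(a_1,…,a_q; b_1,…,b_q), and suppose a_q − 1 is not a source of Γ. Let L_3(Γ) be the graph obtained from Γ by replacing its unique edge of the form (a_q, t) by (a_q − 1, t). Then L_3(Γ) is a flow if and only if a_q − 1 is not a transit point of Γ; and if L_3(Γ) is a flow, then L_3(Γ) ∈ 𝓕_i(a_1,…,a_{q−1}, a_q − 1; b_1,…,b_q) and sgn_i(L_3(Γ)) = sgn_i(Γ). -/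
open Finset

/-- A graph is a flow if it is a flow for some choice of sources and sinks. -/
def IsFlowGraph (E : FlowGraph) : Prop := ∃ A B : Finset ℤ, IsFlow E A B

lemma out_le_one {E : FlowGraph} {A B : Finset ℤ} (h : IsFlow E A B) (r : ℤ) :
    (beginsAt E r).card ≤ 1 := by
  by_cases hA : r ∈ A
  · exact (h.source_out r hA).le
  by_cases hB : r ∈ B
  · simp [h.sink_out r hB]
  · rcases h.transit r hA hB with ⟨h1, _⟩ | ⟨h1, _⟩ <;> simp [h1]

lemma in_le_one {E : FlowGraph} {A B : Finset ℤ} (h : IsFlow E A B) (r : ℤ) :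
    (endsAt E r).card ≤ 1 := by
  by_cases hA : r ∈ A
  · simp [h.source_in r hA]
  by_cases hB : r ∈ B
  · exact (h.sink_in r hB).le
  · rcases h.transit r hA hB with ⟨_, h2⟩ | ⟨_, h2⟩ <;> simp [h2]

lemma beginsAt_unique {E : FlowGraph} {A B : Finset ℤ} (h : IsFlow E A B) {r : ℤ}
    {e₁ e₂ : ℤ × ℤ} (h1 : e₁ ∈ E) (h2 : e₂ ∈ E) (hr1 : e₁.1 = r) (hr2 : e₂.1 = r) :
    e₁ = e₂ :=
  Finset.card_le_one.mp (out_le_one h r) e₁ (mem_beginsAt.mpr ⟨h1, hr1⟩)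
    e₂ (mem_beginsAt.mpr ⟨h2, hr2⟩)

lemma endsAt_unique {E : FlowGraph} {A B : Finset ℤ} (h : IsFlow E A B) {r : ℤ}
    {e₁ e₂ : ℤ × ℤ} (h1 : e₁ ∈ E) (h2 : e₂ ∈ E) (hr1 : e₁.2 = r) (hr2 : e₂.2 = r) :
    e₁ = e₂ :=
  Finset.card_le_one.mp (in_le_one h r) e₁ (mem_endsAt.mpr ⟨h1, hr1⟩)
    e₂ (mem_endsAt.mpr ⟨h2, hr2⟩)

lemma linked_reach {E : FlowGraph} {A B : Finset ℤ} (h : IsFlow E A B) {x y : ℤ}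
    (hxy : Linked E x y) :
    Relation.ReflTransGen (fun u v => (u, v) ∈ E) x y ∨
    Relation.ReflTransGen (fun u v => (u, v) ∈ E) y x := by
  induction hxy with
  | refl => exact Or.inl .refl
  | @tail c d hxc hcd ih =>
    rcases hcd with hcd | hdc
    · rcases ih with ih | ih
      · exact Or.inl (ih.tail hcd)
      · rcases ih.cases_head with h' | ⟨e, hce, hex⟩
        · exact Or.inl (h' ▸ Relation.ReflTransGen.single hcd)
        · have he : e = d := by
            have := beginsAt_unique h (e₁ := (c, e)) (e₂ := (c, d)) hce hcd rfl rfl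
            simpa using this
          exact Or.inr (he ▸ hex)
    · rcases ih with ih | ih
      · rcases Relation.ReflTransGen.cases_tail ih with h' | ⟨e, hxe, hec⟩
        · exact Or.inr (h' ▸ Relation.ReflTransGen.single hdc)
        · have he : e = d := by
            have := endsAt_unique h (e₁ := (e, c)) (e₂ := (d, c)) hec hdc rfl rfl
            simpa using this
          exact Or.inl (he ▸ hxe)
      · exact Or.inr (ih.head hdc)

lemma sink_linked {E : FlowGraph} {A B : Finset ℤ} (h : IsFlow E A B) {x y : ℤ}
    (hx : x ∈ B) (hy : y ∈ B) (hxy : Linked E x y) : x = y := by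
  rcases linked_reach h hxy with hr | hr <;>
    rcases hr.cases_head with h' | ⟨c, hc, _⟩
  · exact h'
  · exact absurd (mem_beginsAt.mpr ⟨hc, rfl⟩) (by simp [h.sink_out x hx])
  · exact h'.symm
  · exact absurd (mem_beginsAt.mpr ⟨hc, rfl⟩) (by simp [h.sink_out y hy])

lemma linked_symm {E : FlowGraph} {x y : ℤ} (h : Linked E x y) : Linked E y x :=
  (@Relation.ReflTransGen.stdSymm _ (fun u v => (u, v) ∈ E ∨ (v, u) ∈ E) ⟨fun _ _ hab => hab.symm⟩).symm _ _ h

lemma mem_transitSet {E : FlowGraph} {A B : Finset ℤ} {r : ℤ} :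
    r ∈ transitSet E A B ↔ ((∃ e ∈ E, e.1 = r ∨ e.2 = r) ∧ r ∉ A ∧ r ∉ B) := by
  simp only [transitSet, Finset.mem_sdiff, Finset.mem_union, Finset.mem_image]
  constructor
  · rintro ⟨h1, h2⟩
    push_neg at h2
    refine ⟨?_, h2.1, h2.2⟩
    rcases h1 with ⟨e, he, hr⟩ | ⟨e, he, hr⟩
    · exact ⟨e, he, Or.inl hr⟩
    · exact ⟨e, he, Or.inr hr⟩
  · rintro ⟨⟨e, he, hr | hr⟩, h2, h3⟩
    · exact ⟨Or.inl ⟨e, he, hr⟩, by tauto⟩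
    · exact ⟨Or.inr ⟨e, he, hr⟩, by tauto⟩

/-- Lemma 14 (first part): let `Γ ∈ 𝓕_i(a_1,…,a_q; b_1,…,b_q)` and suppose
`a_q - 1` is not a source of `Γ`; let `L_3(Γ)` replace the edge `(a_q, t)` by
`(a_q - 1, t)`. Then `L_3(Γ)` is a flow iff `a_q - 1` is not a transit point of
`Γ`, and in that case it belongs to `𝓕_i(a_1,…,a_{q-1}, a_q - 1; b_1,…,b_q)`
and has the same `i`-sign as `Γ`. -/
theorem statement3 {q : ℕ} (i : ℤ) (a b : Fin (q + 1) → ℤ)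
    (ha : StrictMono a) (hb : StrictAnti b)
    (hai : ∀ j, a j ≤ i) (hbi : ∀ j, i < b j)
    (E : FlowGraph) (hE : InF i a b E)
    (hns : ∀ j, a j ≠ a (Fin.last q) - 1)
    (t : ℤ) (ht : (a (Fin.last q), t) ∈ E) :
    (IsFlowGraph (insert (a (Fin.last q) - 1, t) (E.erase (a (Fin.last q), t)))
      ↔ ¬ IsTransitPoint E (srcSet a) (srcSet b) (a (Fin.last q) - 1)) ∧
    (¬ IsTransitPoint E (srcSet a) (srcSet b) (a (Fin.last q) - 1) →
      InF i (Function.update a (Fin.last q) (a (Fin.last q) - 1)) b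
        (insert (a (Fin.last q) - 1, t) (E.erase (a (Fin.last q), t))) ∧
      ∀ σ τ : Equiv.Perm (Fin (q + 1)),
        IsLinkingPerm E a b σ →
        IsLinkingPerm (insert (a (Fin.last q) - 1, t) (E.erase (a (Fin.last q), t)))
          (Function.update a (Fin.last q) (a (Fin.last q) - 1)) b τ →
        signValue i b τ (insert (a (Fin.last q) - 1, t) (E.erase (a (Fin.last q), t)))
            (srcSet (Function.update a (Fin.last q) (a (Fin.last q) - 1))) (srcSet b)
          = signValue i b σ E (srcSet a) (srcSet b)) := by
  classical
  obtain ⟨hF, hT⟩ := hE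
  set m := a (Fin.last q) with hm
  set a' := Function.update a (Fin.last q) (m - 1) with ha'
  set E' := insert (m - 1, t) (E.erase (m, t)) with hE'
  -- basic facts
  have hmA : m ∈ srcSet a := Finset.mem_image.mpr ⟨Fin.last q, Finset.mem_univ _, rfl⟩
  have hmt : m < t := hF.edge_lt _ ht
  have haj : ∀ j, j ≠ Fin.last q → a j < m :=
    fun j hj => ha (lt_of_le_of_ne (Fin.le_last j) hj)
  have hA_le : ∀ x ∈ srcSet a, x ≤ i := by
    intro x hx
    obtain ⟨j, -, rfl⟩ := Finset.mem_image.mp hx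
    exact hai j
  have hB_gt : ∀ x ∈ srcSet b, i < x := by
    intro x hx
    obtain ⟨j, -, rfl⟩ := Finset.mem_image.mp hx
    exact hbi j
  have hm'A : m - 1 ∉ srcSet a := by
    intro hmem
    obtain ⟨j, -, hj⟩ := Finset.mem_image.mp hmem
    exact hns j hj
  have hm'B : m - 1 ∉ srcSet b := fun h => by have := hB_gt _ h; have := hai (Fin.last q); omega
  have hmB : m ∉ srcSet b := fun h => by have := hB_gt _ h; have := hai (Fin.last q); omega
  have htB : ∀ x ∈ srcSet b, m - 1 < x := fun x hx => by
    have := hB_gt x hx; have := hai (Fin.last q); omega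
  have huniq : ∀ e ∈ E, e.1 = m → e = (m, t) := fun e he h1 =>
    beginsAt_unique hF he ht h1 rfl
  have hnoinm : ∀ e ∈ E, e.2 ≠ m := by
    intro e he h2
    have := hF.source_in m hmA
    exact absurd (mem_endsAt.mpr ⟨he, h2⟩) (by simp [this])
  have hm't : (m - 1, t) ∉ E := by
    intro hmem
    have := endsAt_unique hF hmem ht rfl rfl
    simp only [Prod.mk.injEq] at this
    omega
  have hmemE' : ∀ e : ℤ × ℤ, e ∈ E' ↔ e = (m - 1, t) ∨ (e ∈ E ∧ e ≠ (m, t)) := by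
    intro e
    simp only [hE', Finset.mem_insert, Finset.mem_erase]
    tauto
  -- the main construction, under the hypothesis that m - 1 is not a transit point
  have main : ¬ IsTransitPoint E (srcSet a) (srcSet b) (m - 1) →
      IsFlow E' (srcSet a') (srcSet b) ∧
      transitSet E' (srcSet a') (srcSet b) = transitSet E (srcSet a) (srcSet b) := by
    intro hnt
    have hno : ∀ e ∈ E, e.1 ≠ m - 1 ∧ e.2 ≠ m - 1 := by
      intro e he
      rcases hF.transit (m - 1) hm'A hm'B with ⟨h1, h2⟩ | ⟨h1, h2⟩
      · constructor <;> intro hc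
        · exact absurd (mem_beginsAt.mpr ⟨he, hc⟩) (by simp [h1])
        · exact absurd (mem_endsAt.mpr ⟨he, hc⟩) (by simp [h2])
      · exfalso
        apply hnt
        rw [IsTransitPoint, mem_transitSet]
        refine ⟨?_, hm'A, hm'B⟩
        have hpos : 0 < (beginsAt E (m - 1)).card := by omega
        obtain ⟨e', he'⟩ := Finset.card_pos.mp hpos
        rw [mem_beginsAt] at he'
        exact ⟨e', he'.1, Or.inl he'.2⟩
    -- degree computations for E'
    have hb_m' : beginsAt E' (m - 1) = {(m - 1, t)} := by
      ext e
      simp only [mem_beginsAt, hmemE', Finset.mem_singleton]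
      constructor
      · rintro ⟨(rfl | ⟨heE, -⟩), h1⟩
        · rfl
        · exact absurd h1 (hno e heE).1
      · rintro rfl; exact ⟨Or.inl rfl, rfl⟩
    have hb_m : beginsAt E' m = ∅ := by
      ext e
      simp only [mem_beginsAt, hmemE', Finset.notMem_empty, iff_false]
      rintro ⟨(rfl | ⟨heE, hne⟩), h1⟩
      · have h1' : m - 1 = m := h1; omega
      · exact hne (huniq e heE h1)
    have he_m : endsAt E' m = ∅ := by
      ext e
      simp only [mem_endsAt, hmemE', Finset.notMem_empty, iff_false]
      rintro ⟨(rfl | ⟨heE, -⟩), h2⟩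
      · have h2' : t = m := h2; omega
      · exact hnoinm e heE h2
    have he_m' : endsAt E' (m - 1) = ∅ := by
      ext e
      simp only [mem_endsAt, hmemE', Finset.notMem_empty, iff_false]
      rintro ⟨(rfl | ⟨heE, -⟩), h2⟩
      · have h2' : t = m - 1 := h2; omega
      · exact (hno e heE).2 h2
    have hb_other : ∀ r : ℤ, r ≠ m → r ≠ m - 1 → beginsAt E' r = beginsAt E r := by
      intro r hrm hrm'
      ext e
      simp only [mem_beginsAt, hmemE']
      constructor
      · rintro ⟨(rfl | ⟨heE, -⟩), h1⟩
        · have h1' : m - 1 = r := h1; omega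
        · exact ⟨heE, h1⟩
      · rintro ⟨heE, h1⟩
        refine ⟨Or.inr ⟨heE, ?_⟩, h1⟩
        rintro rfl
        have h1' : m = r := h1
        exact hrm h1'.symm
    have he_other : ∀ r : ℤ, r ≠ t → endsAt E' r = endsAt E r := by
      intro r hrt
      ext e
      simp only [mem_endsAt, hmemE']
      constructor
      · rintro ⟨(rfl | ⟨heE, -⟩), h2⟩
        · have h2' : t = r := h2; exact absurd h2'.symm hrt
        · exact ⟨heE, h2⟩
      · rintro ⟨heE, h2⟩
        refine ⟨Or.inr ⟨heE, ?_⟩, h2⟩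
        rintro rfl
        have h2' : t = r := h2
        exact hrt h2'.symm
    have he_t_card : (endsAt E' t).card = (endsAt E t).card := by
      have hset : endsAt E' t = insert (m - 1, t) ((endsAt E t).erase (m, t)) := by
        ext e
        simp only [mem_endsAt, hmemE', Finset.mem_insert, Finset.mem_erase, mem_endsAt]
        constructor
        · rintro ⟨(rfl | ⟨heE, hne⟩), h2⟩
          · exact Or.inl rfl
          · exact Or.inr ⟨hne, heE, h2⟩
        · rintro (rfl | ⟨hne, heE, h2⟩)
          · exact ⟨Or.inl rfl, rfl⟩
          · exact ⟨Or.inr ⟨heE, hne⟩, h2⟩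
      rw [hset]
      have hmem1 : (m, t) ∈ endsAt E t := mem_endsAt.mpr ⟨ht, rfl⟩
      have hpos : 0 < (endsAt E t).card := Finset.card_pos.mpr ⟨_, hmem1⟩
      have hnm : (m - 1, t) ∉ (endsAt E t).erase (m, t) := by
        intro hc
        exact hm't (mem_endsAt.mp (Finset.mem_of_mem_erase hc)).1
      rw [Finset.card_insert_of_notMem hnm, Finset.card_erase_of_mem hmem1]
      omega
    -- membership in srcSet a'
    have hA'mem : ∀ x : ℤ, x ∈ srcSet a' ↔ (x ∈ srcSet a ∧ x ≠ m) ∨ x = m - 1 := by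
      intro x
      simp only [srcSet, Finset.mem_image, Finset.mem_univ, true_and]
      constructor
      · rintro ⟨j, rfl⟩
        by_cases hj : j = Fin.last q
        · subst hj; right; simp [ha']
        · left
          rw [ha', Function.update_of_ne hj]
          exact ⟨⟨j, rfl⟩, ne_of_lt (haj j hj)⟩
      · rintro (⟨⟨j, rfl⟩, hne⟩ | rfl)
        · have hj : j ≠ Fin.last q := fun h => hne (by rw [h, hm])
          exact ⟨j, by rw [ha', Function.update_of_ne hj]⟩
        · exact ⟨Fin.last q, by simp [ha']⟩
    have hflow : IsFlow E' (srcSet a') (srcSet b) := by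
      refine ⟨?_, ?_, ?_, ?_, ?_, ?_, ?_⟩
      · intro e he
        rcases (hmemE' e).mp he with rfl | ⟨heE, -⟩
        · show m - 1 < t; omega
        · exact hF.edge_lt e heE
      · rw [Finset.disjoint_left]
        intro x hx hxB
        rcases (hA'mem x).mp hx with ⟨hxA, -⟩ | rfl
        · exact absurd (hB_gt x hxB) (not_lt.mpr (hA_le x hxA))
        · exact absurd (htB _ hxB) (by omega)
      · intro x hx
        rcases (hA'mem x).mp hx with ⟨hxA, hxm⟩ | rfl
        · have hxm' : x ≠ m - 1 := fun h => hm'A (h ▸ hxA)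
          rw [hb_other x hxm hxm']
          exact hF.source_out x hxA
        · rw [hb_m']; simp
      · intro x hx
        rcases (hA'mem x).mp hx with ⟨hxA, hxm⟩ | rfl
        · have hxt : x ≠ t := by
            rintro rfl
            have hsi := hF.source_in x hxA
            exact absurd (mem_endsAt.mpr ⟨ht, rfl⟩) (by simp [hsi])
          rw [he_other x hxt]
          exact hF.source_in x hxA
        · exact he_m'
      · intro y hy
        by_cases hyt : y = t
        · subst hyt; rw [he_t_card]; exact hF.sink_in y hy
        · rw [he_other y hyt]; exact hF.sink_in y hy
      · intro y hy
        have h1 : y ≠ m := fun h => hmB (h ▸ hy)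
        have h2 : y ≠ m - 1 := fun h => hm'B (h ▸ hy)
        rw [hb_other y h1 h2]
        exact hF.sink_out y hy
      · intro r hrA' hrB
        by_cases hrm : r = m
        · subst hrm; exact Or.inl ⟨hb_m, he_m⟩
        by_cases hrm' : r = m - 1
        · exact absurd ((hA'mem r).mpr (Or.inr hrm')) hrA'
        have hrA : r ∉ srcSet a := fun h => hrA' ((hA'mem r).mpr (Or.inl ⟨h, hrm⟩))
        rcases hF.transit r hrA hrB with ⟨h1, h2⟩ | ⟨h1, h2⟩
        · by_cases hrt : r = t
          · subst hrt
            exact absurd (mem_endsAt.mpr ⟨ht, rfl⟩) (by simp [h2])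
          · exact Or.inl ⟨by rw [hb_other r hrm hrm']; exact h1,
              by rw [he_other r hrt]; exact h2⟩
        · right
          refine ⟨by rw [hb_other r hrm hrm']; exact h1, ?_⟩
          by_cases hrt : r = t
          · subst hrt; rw [he_t_card]; exact h2
          · rw [he_other r hrt]; exact h2
    refine ⟨hflow, ?_⟩
    ext r
    rw [mem_transitSet, mem_transitSet]
    constructor
    · rintro ⟨⟨e, heE', hre⟩, hrA', hrB⟩
      have hrm' : r ≠ m - 1 := fun h => hrA' ((hA'mem r).mpr (Or.inr h))
      have hrm : r ≠ m := by
        rintro rfl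
        rcases (hmemE' e).mp heE' with rfl | ⟨heE, hne⟩
        · rcases hre with h1 | h2
          · have h1' : m - 1 = m := h1; omega
          · have h2' : t = m := h2; omega
        · rcases hre with h1 | h2
          · exact hne (huniq e heE h1)
          · exact hnoinm e heE h2
      have hrA : r ∉ srcSet a := fun h => hrA' ((hA'mem r).mpr (Or.inl ⟨h, hrm⟩))
      refine ⟨?_, hrA, hrB⟩
      rcases (hmemE' e).mp heE' with rfl | ⟨heE, -⟩
      · rcases hre with h1 | h2
        · have h1' : m - 1 = r := h1
          exact absurd h1'.symm hrm'
        · exact ⟨(m, t), ht, Or.inr h2⟩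
      · exact ⟨e, heE, hre⟩
    · rintro ⟨⟨e, heE, hre⟩, hrA, hrB⟩
      have hrm : r ≠ m := fun h => hrA (h ▸ hmA)
      have hrm' : r ≠ m - 1 := by
        rintro rfl
        rcases hre with h1 | h2
        · exact (hno e heE).1 h1
        · exact (hno e heE).2 h2
      refine ⟨?_, fun h => ?_, hrB⟩
      · by_cases hemt : e = (m, t)
        · subst hemt
          rcases hre with h1 | h2
          · have h1' : m = r := h1
            exact absurd h1'.symm hrm
          · exact ⟨(m - 1, t), (hmemE' _).mpr (Or.inl rfl), Or.inr h2⟩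
        · exact ⟨e, (hmemE' e).mpr (Or.inr ⟨heE, hemt⟩), hre⟩
      · rcases (hA'mem r).mp h with ⟨hA, -⟩ | h'
        · exact hrA hA
        · exact hrm' h'
  -- assembly
  constructor
  · constructor
    · rintro ⟨A2, B2, hfl⟩ hnt'
      rcases hF.transit (m - 1) hm'A hm'B with ⟨h1, h2⟩ | ⟨h1, h2⟩
      · rw [IsTransitPoint, mem_transitSet] at hnt'
        obtain ⟨⟨e, heE, hre⟩, -, -⟩ := hnt'
        rcases hre with h' | h'
        · exact absurd (mem_beginsAt.mpr ⟨heE, h'⟩) (by simp [h1])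
        · exact absurd (mem_endsAt.mpr ⟨heE, h'⟩) (by simp [h2])
      · obtain ⟨e, he⟩ := Finset.card_eq_one.mp h1
        have heb : e ∈ E ∧ e.1 = m - 1 := mem_beginsAt.mp (he ▸ Finset.mem_singleton_self e)
        have hne1 : e ≠ (m - 1, t) := fun h => hm't (h ▸ heb.1)
        have hne2 : e ≠ (m, t) := by
          rintro rfl
          have h' : m = m - 1 := heb.2
          omega
        have hE'1 : e ∈ E' := (hmemE' e).mpr (Or.inr ⟨heb.1, hne2⟩)
        have hE'2 : (m - 1, t) ∈ E' := (hmemE' _).mpr (Or.inl rfl)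
        have hcard : 1 < (beginsAt E' (m - 1)).card :=
          Finset.one_lt_card.mpr ⟨e, mem_beginsAt.mpr ⟨hE'1, heb.2⟩, (m - 1, t),
            mem_beginsAt.mpr ⟨hE'2, rfl⟩, hne1⟩
        have hle := out_le_one hfl (m - 1)
        omega
    · intro hnt
      exact ⟨srcSet a', srcSet b, (main hnt).1⟩
  · intro hnt
    obtain ⟨hflow, htrans⟩ := main hnt
    have hno : ∀ e ∈ E, e.1 ≠ m - 1 ∧ e.2 ≠ m - 1 := by
      intro e he
      rcases hF.transit (m - 1) hm'A hm'B with ⟨h1, h2⟩ | ⟨h1, h2⟩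
      · constructor <;> intro hc
        · exact absurd (mem_beginsAt.mpr ⟨he, hc⟩) (by simp [h1])
        · exact absurd (mem_endsAt.mpr ⟨he, hc⟩) (by simp [h2])
      · exfalso
        apply hnt
        rw [IsTransitPoint, mem_transitSet]
        refine ⟨?_, hm'A, hm'B⟩
        obtain ⟨e', he'⟩ := Finset.card_pos.mp (by omega : 0 < (beginsAt E (m - 1)).card)
        rw [mem_beginsAt] at he'
        exact ⟨e', he'.1, Or.inl he'.2⟩
    refine ⟨⟨hflow, ?_⟩, ?_⟩
    · intro r hr
      rw [IsTransitPoint, htrans] at hr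
      exact hT r hr
    · intro σ τ hσ hτ
      set f := Equiv.swap m (m - 1) with hf
      have hedge : ∀ u v : ℤ, (u, v) ∈ E → (f u, f v) ∈ E' := by
        intro u v huv
        by_cases h : (u, v) = (m, t)
        · rw [Prod.mk.injEq] at h
          obtain ⟨rfl, rfl⟩ := h
          rw [hf, Equiv.swap_apply_left, Equiv.swap_apply_of_ne_of_ne (by omega) (by omega)]
          exact (hmemE' _).mpr (Or.inl rfl)
        · have hum : u ≠ m := fun hc => h (huniq (u, v) huv hc)
          have hvm : v ≠ m := hnoinm (u, v) huv
          have hum' : u ≠ m - 1 := (hno (u, v) huv).1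
          have hvm' : v ≠ m - 1 := (hno (u, v) huv).2
          rw [hf, Equiv.swap_apply_of_ne_of_ne hum hum',
            Equiv.swap_apply_of_ne_of_ne hvm hvm']
          exact (hmemE' _).mpr (Or.inr ⟨huv, h⟩)
      have hlink : ∀ x y : ℤ, Linked E x y → Linked E' (f x) (f y) := fun x y hxy =>
        Relation.ReflTransGen.lift (p := fun u v => (u, v) ∈ E' ∨ (v, u) ∈ E') f
          (fun u v huv => huv.imp (hedge u v) (hedge v u)) x y hxy
      have hfb : ∀ k, f (b k) = b k := by
        intro k
        have h1 := hbi k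
        have h2 := hai (Fin.last q)
        exact Equiv.swap_apply_of_ne_of_ne (by omega) (by omega)
      have hfa : ∀ j, f (a j) = a' j := by
        intro j
        by_cases hj : j = Fin.last q
        · subst hj
          rw [hf, ← hm, Equiv.swap_apply_left, ha']
          simp
        · rw [hf, Equiv.swap_apply_of_ne_of_ne (ne_of_lt (haj j hj)) (hns j), ha',
            Function.update_of_ne hj]
      have hτσ : τ = σ := by
        apply Equiv.ext
        intro j
        have h1 : Linked E' (a' j) (b (σ j)) := by
          have hl := hlink (a j) (b (σ j)) (hσ j)
          rwa [hfa j, hfb] at hl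
        have h2 : Linked E' (b (τ j)) (b (σ j)) :=
          Relation.ReflTransGen.trans (linked_symm (hτ j)) h1
        have hbb : b (τ j) = b (σ j) := sink_linked hflow
          (Finset.mem_image.mpr ⟨τ j, Finset.mem_univ _, rfl⟩)
          (Finset.mem_image.mpr ⟨σ j, Finset.mem_univ _, rfl⟩) h2
        exact hb.injective hbb
      simp only [signValue, htrans, hτσ]
end

section
/- Let q ≥ 1, Γ ∈ 𝓕_i(a_1,…,a_q; b_1,…,b_q), suppose a_q − 1 is not a source of Γ, and let L_3(Γ) be the graph obtained from Γ by replacing its unique edge of the form (a_q, t) by (a_q − 1, t). If L_3(Γ) is not a flow (equivalently, a_q − 1 is a transit point of Γ), then there exists exactly one flow Γ' ∈ 𝓕_i(a_1,…,a_q; b_1,…,b_q) distinct from Γ such that L_3(Γ) = L_3(Γ'), and moreover sgn_i(Γ) = −sgn_i(Γ'). -/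
open Finset

/-- The operation `L_3` for the flow with last source `c`: replace the edge
beginning at `c` by the edge with the same end beginning at `c - 1`. -/
def L3g (c : ℤ) (E : FlowGraph) : FlowGraph :=
  E.image (fun e => if e.1 = c then (c - 1, e.2) else e)

namespace S4

def OutUniq (F : FlowGraph) : Prop := ∀ e ∈ F, ∀ e' ∈ F, e.1 = e'.1 → e = e'
def InUniq (F : FlowGraph) : Prop := ∀ e ∈ F, ∀ e' ∈ F, e.2 = e'.2 → e = e'
def EdgeLt (F : FlowGraph) : Prop := ∀ e ∈ F, e.1 < e.2

lemma outUniq_mono {F G : FlowGraph} (h : F ⊆ G) (hG : OutUniq G) : OutUniq F :=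
  fun e he e' he' hh => hG e (h he) e' (h he') hh
lemma edgeLt_mono {F G : FlowGraph} (h : F ⊆ G) (hG : EdgeLt G) : EdgeLt F :=
  fun e he => hG e (h he)

noncomputable def nextAux (F : FlowGraph) : ℕ → ℤ → ℤ
  | 0, x => x
  | n+1, x => if h : ∃ e ∈ F, e.1 = x then nextAux F n h.choose.2 else x

def μ (F : FlowGraph) (x : ℤ) : ℕ := (F.filter (fun e => x ≤ e.1)).card

lemma nextAux_stuck {F : FlowGraph} {x : ℤ} (h : ¬ ∃ e ∈ F, e.1 = x) :
    ∀ n, nextAux F n x = x := by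
  intro n; cases n <;> simp [nextAux, h]

lemma nextAux_step {F : FlowGraph} (hF : OutUniq F) {x v : ℤ} (hxv : (x, v) ∈ F) (n : ℕ) :
    nextAux F (n+1) x = nextAux F n v := by
  have h : ∃ e ∈ F, e.1 = x := ⟨(x, v), hxv, rfl⟩
  have hch : h.choose = (x, v) := hF _ h.choose_spec.1 _ hxv (by rw [h.choose_spec.2])
  simp only [nextAux, dif_pos h, hch]

lemma μ_lt {F : FlowGraph} (hlt : EdgeLt F) {x v : ℤ} (hxv : (x, v) ∈ F) : μ F v < μ F x := by
  apply Finset.card_lt_card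
  constructor
  · intro e he
    simp only [mem_filter] at he ⊢
    exact ⟨he.1, le_trans (le_of_lt (hlt _ hxv)) he.2⟩
  · intro hsub
    have h1 : (x, v) ∈ F.filter (fun e => x ≤ e.1) := by simp [hxv]
    have h2 := hsub h1
    simp only [mem_filter] at h2
    have := hlt _ hxv
    omega

lemma μ_zero_stuck {F : FlowGraph} {x : ℤ} (h0 : μ F x ≤ 0) : ¬ ∃ e ∈ F, e.1 = x := by
  rintro ⟨e, heF, hex⟩
  have : e ∈ F.filter (fun e => x ≤ e.1) := by simp [heF, hex.ge]
  have := Finset.card_pos.mpr ⟨e, this⟩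
  simp only [μ] at h0; omega

lemma nextAux_stab {F : FlowGraph} (hF : OutUniq F) (hlt : EdgeLt F) :
    ∀ n x m, μ F x ≤ n → n ≤ m → nextAux F n x = nextAux F m x := by
  intro n
  induction n with
  | zero =>
    intro x m h0 _
    rw [nextAux_stuck (μ_zero_stuck h0), nextAux_stuck (μ_zero_stuck h0)]
  | succ n ih =>
    intro x m hμ hm
    by_cases h : ∃ e ∈ F, e.1 = x
    · obtain ⟨e, heF, hex⟩ := h
      have hxv : (x, e.2) ∈ F := by rwa [show (x, e.2) = e from Prod.ext hex.symm rfl]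
      obtain ⟨m', rfl⟩ : ∃ m', m = m' + 1 := ⟨m - 1, by omega⟩
      rw [nextAux_step hF hxv, nextAux_step hF hxv]
      exact ih e.2 m' (by have := μ_lt hlt hxv; omega) (by omega)
    · rw [nextAux_stuck h, nextAux_stuck h]

noncomputable def term (F : FlowGraph) (x : ℤ) : ℤ := nextAux F (μ F x) x

lemma term_stuck {F : FlowGraph} {x : ℤ} (h : ¬ ∃ e ∈ F, e.1 = x) : term F x = x :=
  nextAux_stuck h _

lemma term_step {F : FlowGraph} (hF : OutUniq F) (hlt : EdgeLt F) {x v : ℤ}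
    (hxv : (x, v) ∈ F) : term F x = term F v := by
  have h1 : term F x = nextAux F (μ F x + 1) x := nextAux_stab hF hlt _ _ _ le_rfl (by omega)
  rw [nextAux_step hF hxv] at h1
  rw [h1, term]
  exact (nextAux_stab hF hlt (μ F v) v (μ F x) le_rfl (le_of_lt (μ_lt hlt hxv))).symm

lemma term_noOut {F : FlowGraph} (hF : OutUniq F) (hlt : EdgeLt F) (x : ℤ) :
    ¬ ∃ e ∈ F, e.1 = term F x := by
  suffices h : ∀ n x, μ F x ≤ n → ¬ ∃ e ∈ F, e.1 = term F x by exact h (μ F x) x le_rfl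
  intro n
  induction n with
  | zero => intro x h0; rw [term_stuck (μ_zero_stuck h0)]; exact μ_zero_stuck h0
  | succ n ih =>
    intro x hμ
    by_cases h : ∃ e ∈ F, e.1 = x
    · obtain ⟨e, heF, hex⟩ := h
      have hxv : (x, e.2) ∈ F := by rwa [show (x, e.2) = e from Prod.ext hex.symm rfl]
      rw [term_step hF hlt hxv]
      exact ih e.2 (by have := μ_lt hlt hxv; omega)
    · rw [term_stuck h]; exact h

lemma term_ge {F : FlowGraph} (hF : OutUniq F) (hlt : EdgeLt F) (x : ℤ) : x ≤ term F x := by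
  suffices h : ∀ n x, μ F x ≤ n → x ≤ term F x by exact h (μ F x) x le_rfl
  intro n
  induction n with
  | zero => intro x h0; rw [term_stuck (μ_zero_stuck h0)]
  | succ n ih =>
    intro x hμ
    by_cases h : ∃ e ∈ F, e.1 = x
    · obtain ⟨e, heF, hex⟩ := h
      have hxv : (x, e.2) ∈ F := by rwa [show (x, e.2) = e from Prod.ext hex.symm rfl]
      rw [term_step hF hlt hxv]
      have := ih e.2 (by have := μ_lt hlt hxv; omega)
      have := hlt _ hxv
      omega
    · rw [term_stuck h]

lemma term_linked {F : FlowGraph} (hF : OutUniq F) (hlt : EdgeLt F) (x : ℤ) :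
    Linked F x (term F x) := by
  suffices h : ∀ n x, μ F x ≤ n → Linked F x (term F x) by exact h (μ F x) x le_rfl
  intro n
  induction n with
  | zero => intro x h0; rw [term_stuck (μ_zero_stuck h0)]; exact Relation.ReflTransGen.refl
  | succ n ih =>
    intro x hμ
    by_cases h : ∃ e ∈ F, e.1 = x
    · obtain ⟨e, heF, hex⟩ := h
      have hxv : (x, e.2) ∈ F := by rwa [show (x, e.2) = e from Prod.ext hex.symm rfl]
      rw [term_step hF hlt hxv]
      exact Relation.ReflTransGen.head (Or.inl hxv) (ih e.2 (by have := μ_lt hlt hxv; omega))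
    · rw [term_stuck h]; exact Relation.ReflTransGen.refl

lemma term_endsAt {F : FlowGraph} (hF : OutUniq F) (hlt : EdgeLt F) (x : ℤ) :
    (∃ e ∈ F, e.2 = term F x) ∨ term F x = x := by
  suffices h : ∀ n x, μ F x ≤ n → ((∃ e ∈ F, e.2 = term F x) ∨ term F x = x) by
    exact h (μ F x) x le_rfl
  intro n
  induction n with
  | zero => intro x h0; right; exact term_stuck (μ_zero_stuck h0)
  | succ n ih =>
    intro x hμ
    by_cases h : ∃ e ∈ F, e.1 = x
    · obtain ⟨e, heF, hex⟩ := h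
      have hxv : (x, e.2) ∈ F := by rwa [show (x, e.2) = e from Prod.ext hex.symm rfl]
      rw [term_step hF hlt hxv]
      rcases ih e.2 (by have := μ_lt hlt hxv; omega) with h' | h'
      · exact Or.inl h'
      · exact Or.inl ⟨(x, e.2), hxv, h'.symm⟩
    · right; exact term_stuck h

lemma linked_term {F : FlowGraph} (hF : OutUniq F) (hlt : EdgeLt F) {x y : ℤ}
    (h : Linked F x y) : term F x = term F y := by
  induction h using Relation.ReflTransGen.head_induction_on with
  | refl => rfl
  | head hstep _ ih =>
    rcases hstep with h' | h'
    · rw [term_step hF hlt h', ih]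
    · rw [← term_step hF hlt h', ih]

lemma term_erase {F : FlowGraph} (hF : OutUniq F) (hlt : EdgeLt F) {e : ℤ × ℤ} (he : e ∈ F) :
    ∀ x, term (F.erase e) x = term F x ∨
      (term (F.erase e) x = e.1 ∧ term F x = term F e.2) := by
  have hF' : OutUniq (F.erase e) := outUniq_mono (erase_subset _ _) hF
  have hlt' : EdgeLt (F.erase e) := edgeLt_mono (erase_subset _ _) hlt
  suffices h : ∀ n x, μ F x ≤ n → (term (F.erase e) x = term F x ∨
      (term (F.erase e) x = e.1 ∧ term F x = term F e.2)) by
    intro x; exact h (μ F x) x le_rfl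
  intro n
  induction n with
  | zero =>
    intro x h0
    left
    have h := μ_zero_stuck h0
    have h' : ¬ ∃ e' ∈ F.erase e, e'.1 = x := by
      rintro ⟨e', he', hx⟩; exact h ⟨e', mem_of_mem_erase he', hx⟩
    rw [term_stuck h, term_stuck h']
  | succ n ih =>
    intro x hμ
    by_cases h : ∃ e' ∈ F, e'.1 = x
    · obtain ⟨e', heF, hex⟩ := h
      have hxv : (x, e'.2) ∈ F := by rwa [show (x, e'.2) = e' from Prod.ext hex.symm rfl]
      by_cases heq : (x, e'.2) = e
      · right
        constructor
        · have hstuck : ¬ ∃ f ∈ F.erase e, f.1 = x := by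
            rintro ⟨f, hf, hfx⟩
            have : f = (x, e'.2) := hF _ (mem_of_mem_erase hf) _ hxv (by rw [hfx])
            rw [this, heq] at hf
            exact (Finset.notMem_erase _ _) hf
          rw [term_stuck hstuck, ← heq]
        · rw [term_step hF hlt hxv, ← heq]
      · have hxv' : (x, e'.2) ∈ F.erase e := Finset.mem_erase.mpr ⟨heq, hxv⟩
        rw [term_step hF hlt hxv, term_step hF' hlt' hxv']
        exact ih e'.2 (by have := μ_lt hlt hxv; omega)
    · left
      have h' : ¬ ∃ e' ∈ F.erase e, e'.1 = x := by
        rintro ⟨e', he', hx⟩; exact h ⟨e', mem_of_mem_erase he', hx⟩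
      rw [term_stuck h, term_stuck h']

lemma term_erase_lt {F : FlowGraph} (hF : OutUniq F) (hlt : EdgeLt F) {e : ℤ × ℤ}
    (he : e ∈ F) {x : ℤ} (hx : e.1 < x) : term (F.erase e) x = term F x := by
  rcases term_erase hF hlt he x with h | ⟨h1, _⟩
  · exact h
  · exfalso
    have := term_ge (F := F.erase e) (outUniq_mono (erase_subset _ _) hF) (edgeLt_mono (erase_subset _ _) hlt) x
    omega

def revG (F : FlowGraph) : FlowGraph := F.image (fun e => (-e.2, -e.1))

lemma mem_revG {F : FlowGraph} {x y : ℤ} : (x, y) ∈ revG F ↔ (-y, -x) ∈ F := by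
  simp only [revG, Finset.mem_image, Prod.ext_iff]
  constructor
  · rintro ⟨⟨s, t⟩, hm, h1, h2⟩
    simp only at h1 h2
    have : (-y, -x) = (s, t) := by rw [Prod.ext_iff]; constructor <;> simp <;> omega
    rwa [this]
  · intro h
    exact ⟨(-y, -x), h, by simp, by simp⟩

lemma revG_revG (F : FlowGraph) : revG (revG F) = F := by
  ext ⟨x, y⟩
  rw [mem_revG, mem_revG]
  simp

lemma outUniq_revG {F : FlowGraph} (hF : InUniq F) : OutUniq (revG F) := by
  rintro ⟨x, y⟩ he ⟨x', y'⟩ he' h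
  simp only at h
  subst h
  rw [mem_revG] at he he'
  have h2 := hF _ he _ he' rfl
  have h3 : y = y' := by
    have := congrArg Prod.fst h2
    simp only at this
    omega
  simp [h3]

lemma edgeLt_revG {F : FlowGraph} (hF : EdgeLt F) : EdgeLt (revG F) := by
  rintro ⟨x, y⟩ he
  rw [mem_revG] at he
  have := hF _ he
  simp only at this ⊢
  omega

lemma revG_erase (F : FlowGraph) (e : ℤ × ℤ) :
    revG (F.erase e) = (revG F).erase (-e.2, -e.1) := by
  ext ⟨x, y⟩
  rw [mem_revG, Finset.mem_erase, Finset.mem_erase, mem_revG]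
  constructor
  · rintro ⟨hne, hm⟩
    refine ⟨fun h => hne ?_, hm⟩
    rw [Prod.ext_iff] at h ⊢
    simp only at h ⊢
    omega
  · rintro ⟨hne, hm⟩
    refine ⟨fun h => hne ?_, hm⟩
    rw [Prod.ext_iff] at h ⊢
    simp only at h ⊢
    omega

lemma linked_mono {F G : FlowGraph} (h : F ⊆ G) {x y : ℤ} (hxy : Linked F x y) :
    Linked G x y := by
  apply Relation.ReflTransGen.mono _ _ _ hxy
  intro u v huv
  rcases huv with h' | h'
  · exact Or.inl (h h')
  · exact Or.inr (h h')

lemma linked_symm {F : FlowGraph} {x y : ℤ} (h : Linked F x y) : Linked F y x :=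
  @Std.Symm.symm _ _ (@Relation.ReflTransGen.stdSymm _ _ ⟨fun _ _ h' => h'.symm⟩) _ _ h

lemma linked_revG {F : FlowGraph} {x y : ℤ} (h : Linked F x y) :
    Linked (revG F) (-x) (-y) := by
  induction h with
  | refl => exact Relation.ReflTransGen.refl
  | tail _ hstep ih =>
    refine Relation.ReflTransGen.tail ih ?_
    rcases hstep with h' | h'
    · exact Or.inr (mem_revG.mpr (by simpa using h'))
    · exact Or.inl (mem_revG.mpr (by simpa using h'))

lemma linked_of_revG {F : FlowGraph} {x y : ℤ} (h : Linked (revG F) x y) :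
    Linked F (-x) (-y) := by
  have := linked_revG h
  rwa [revG_revG] at this


lemma inUniq_mono {F G : FlowGraph} (h : F ⊆ G) (hG : InUniq G) : InUniq F :=
  fun e he e' he' hh => hG e (h he) e' (h he') hh

lemma flow_outCard {E : FlowGraph} {A B : Finset ℤ} (hf : IsFlow E A B) (r : ℤ) :
    (beginsAt E r).card ≤ 1 := by
  by_cases hA : r ∈ A
  · exact le_of_eq (hf.source_out r hA)
  by_cases hB : r ∈ B
  · rw [hf.sink_out r hB]; simp
  rcases hf.transit r hA hB with ⟨h1, _⟩ | ⟨h1, _⟩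
  · rw [h1]; simp
  · omega

lemma flow_inCard {E : FlowGraph} {A B : Finset ℤ} (hf : IsFlow E A B) (r : ℤ) :
    (endsAt E r).card ≤ 1 := by
  by_cases hB : r ∈ B
  · exact le_of_eq (hf.sink_in r hB)
  by_cases hA : r ∈ A
  · rw [hf.source_in r hA]; simp
  rcases hf.transit r hA hB with ⟨_, h1⟩ | ⟨_, h1⟩
  · rw [h1]; simp
  · omega

lemma flow_outUniq {E : FlowGraph} {A B : Finset ℤ} (hf : IsFlow E A B) : OutUniq E := by
  intro e he e' he' h
  have h1 : e ∈ beginsAt E e.1 := Finset.mem_filter.mpr ⟨he, rfl⟩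
  have h2 : e' ∈ beginsAt E e.1 := Finset.mem_filter.mpr ⟨he', h.symm⟩
  exact Finset.card_le_one.mp (flow_outCard hf e.1) _ h1 _ h2

lemma flow_inUniq {E : FlowGraph} {A B : Finset ℤ} (hf : IsFlow E A B) : InUniq E := by
  intro e he e' he' h
  have h1 : e ∈ endsAt E e.2 := Finset.mem_filter.mpr ⟨he, rfl⟩
  have h2 : e' ∈ endsAt E e.2 := Finset.mem_filter.mpr ⟨he', h.symm⟩
  exact Finset.card_le_one.mp (flow_inCard hf e.2) _ h1 _ h2

lemma source_edge {E : FlowGraph} {A B : Finset ℤ} (hf : IsFlow E A B) {c : ℤ} (hc : c ∈ A) :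
    ∃ t, (c, t) ∈ E ∧ ∀ e ∈ E, e.1 = c → e = (c, t) := by
  obtain ⟨e0, he0⟩ := Finset.card_eq_one.mp (hf.source_out c hc)
  have he0m : e0 ∈ beginsAt E c := he0 ▸ Finset.mem_singleton_self e0
  have he0E : e0 ∈ E := (Finset.mem_filter.mp he0m).1
  have he01 : e0.1 = c := (Finset.mem_filter.mp he0m).2
  refine ⟨e0.2, ?_, ?_⟩
  · rwa [show (c, e0.2) = e0 from Prod.ext he01.symm rfl]
  · intro e he h1
    have hmem : e ∈ beginsAt E c := Finset.mem_filter.mpr ⟨he, h1⟩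
    rw [he0, Finset.mem_singleton] at hmem
    rw [hmem]
    exact Prod.ext he01 rfl


lemma out_edge {E : FlowGraph} {r : ℤ} (h : (beginsAt E r).card = 1) :
    ∃ t, (r, t) ∈ E ∧ ∀ e ∈ E, e.1 = r → e = (r, t) := by
  obtain ⟨e0, he0⟩ := Finset.card_eq_one.mp h
  have he0m : e0 ∈ beginsAt E r := he0 ▸ Finset.mem_singleton_self e0
  have he0E : e0 ∈ E := (Finset.mem_filter.mp he0m).1
  have he01 : e0.1 = r := (Finset.mem_filter.mp he0m).2
  refine ⟨e0.2, ?_, ?_⟩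
  · rwa [show (r, e0.2) = e0 from Prod.ext he01.symm rfl]
  · intro e he h1
    have hmem : e ∈ beginsAt E r := Finset.mem_filter.mpr ⟨he, h1⟩
    rw [he0, Finset.mem_singleton] at hmem
    rw [hmem]
    exact Prod.ext he01 rfl

lemma term_sink {E : FlowGraph} {A B : Finset ℤ} (hf : IsFlow E A B)
    {x : ℤ} (hx : ∃ e ∈ E, e.1 = x) : term E x ∈ B := by
  have hOU := flow_outUniq hf
  have hlt : EdgeLt E := hf.edge_lt
  have hnoOut := term_noOut hOU hlt x
  have hin : ∃ e ∈ E, e.2 = term E x := by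
    rcases term_endsAt hOU hlt x with h | h
    · exact h
    · exfalso; apply hnoOut; rw [h]; exact hx
  by_contra hB
  obtain ⟨e, he, h2⟩ := hin
  have hmem : e ∈ endsAt E (term E x) := Finset.mem_filter.mpr ⟨he, h2⟩
  by_cases hA : term E x ∈ A
  · rw [hf.source_in _ hA] at hmem
    exact absurd hmem (Finset.notMem_empty _)
  · rcases hf.transit _ hA hB with ⟨_, h4⟩ | ⟨h3, _⟩
    · rw [h4] at hmem
      exact absurd hmem (Finset.notMem_empty _)
    · have hne : (beginsAt E (term E x)).Nonempty := Finset.card_pos.mp (by omega)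
      obtain ⟨f, hf2⟩ := hne
      have := Finset.mem_filter.mp hf2
      exact hnoOut ⟨f, this.1, this.2⟩

lemma linking_term {q : ℕ} {E : FlowGraph} {a b : Fin q → ℤ}
    (hf : IsFlow E (srcSet a) (srcSet b)) {σ : Equiv.Perm (Fin q)}
    (hσ : IsLinkingPerm E a b σ) (j : Fin q) : term E (a j) = b (σ j) := by
  have hOU := flow_outUniq hf
  have hlt : EdgeLt E := hf.edge_lt
  rw [linked_term hOU hlt (hσ j)]
  apply term_stuck
  rintro ⟨e, he, h2⟩
  have hbB : b (σ j) ∈ srcSet b := Finset.mem_image.mpr ⟨σ j, Finset.mem_univ _, rfl⟩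
  have hmem : e ∈ beginsAt E (b (σ j)) := Finset.mem_filter.mpr ⟨he, h2⟩
  rw [hf.sink_out _ hbB] at hmem
  exact absurd hmem (Finset.notMem_empty _)

lemma L3g_eq {F : FlowGraph} {c t : ℤ} (hct : (c, t) ∈ F)
    (huniq : ∀ e ∈ F, e.1 = c → e = (c, t)) :
    L3g c F = insert (c - 1, t) (F.erase (c, t)) := by
  ext e
  simp only [L3g, Finset.mem_image, Finset.mem_insert, Finset.mem_erase]
  constructor
  · rintro ⟨f, hf, rfl⟩
    by_cases h : f.1 = c
    · rw [huniq f hf h]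
      left; simp
    · right
      simp only [if_neg h]
      exact ⟨fun h' => h (by rw [h']), hf⟩
  · rintro (rfl | ⟨hne, hf⟩)
    · exact ⟨(c, t), hct, by simp⟩
    · refine ⟨e, hf, ?_⟩
      have h : e.1 ≠ c := fun h => hne (huniq e hf h)
      simp [h]

lemma L3g_reconstruct {F : FlowGraph} {c t : ℤ} (hct : (c, t) ∈ F)
    (huniq : ∀ e ∈ F, e.1 = c → e = (c, t)) (hnt : (c - 1, t) ∉ F) :
    F = insert (c, t) ((L3g c F).erase (c - 1, t)) := by
  rw [L3g_eq hct huniq, Finset.erase_insert (fun h => hnt (Finset.mem_of_mem_erase h)),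
    Finset.insert_erase hct]


end S4

/-- Lemma 14 (second part): let `Γ ∈ 𝓕_i(a_1,…,a_q; b_1,…,b_q)`, suppose
`a_q - 1` is not a source of `Γ` but is a transit point of `Γ` (so `L_3(Γ)` is
not a flow). Then there is exactly one flow `Γ' ∈ 𝓕_i(a_1,…,a_q; b_1,…,b_q)`
distinct from `Γ` with `L_3(Γ') = L_3(Γ)`, and `sgn_i(Γ) = -sgn_i(Γ')`. -/


theorem statement4 {q : ℕ} (i : ℤ) (a b : Fin (q + 1) → ℤ)
    (ha : StrictMono a) (hb : StrictAnti b)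
    (hai : ∀ j, a j ≤ i) (hbi : ∀ j, i < b j)
    (E : FlowGraph) (hE : InF i a b E)
    (hns : ∀ j, a j ≠ a (Fin.last q) - 1)
    (htr : IsTransitPoint E (srcSet a) (srcSet b) (a (Fin.last q) - 1)) :
    (∃! E' : FlowGraph, InF i a b E' ∧ E' ≠ E ∧
        L3g (a (Fin.last q)) E' = L3g (a (Fin.last q)) E) ∧
    ∀ E' : FlowGraph, InF i a b E' → E' ≠ E →
      L3g (a (Fin.last q)) E' = L3g (a (Fin.last q)) E →
      ∀ σ τ : Equiv.Perm (Fin (q + 1)),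
        IsLinkingPerm E a b σ → IsLinkingPerm E' a b τ →
        signValue i b σ E (srcSet a) (srcSet b)
          = - signValue i b τ E' (srcSet a) (srcSet b) := by
  classical
  obtain ⟨c, hc_def⟩ : ∃ c : ℤ, c = a (Fin.last q) := ⟨_, rfl⟩
  rw [← hc_def] at hns htr ⊢
  obtain ⟨hfl, hbd⟩ := hE
  have hOU : S4.OutUniq E := S4.flow_outUniq hfl
  have hIU : S4.InUniq E := S4.flow_inUniq hfl
  have hlt : S4.EdgeLt E := hfl.edge_lt
  have hcA : c ∈ srcSet a := by rw [hc_def]; exact Finset.mem_image.mpr ⟨Fin.last q, Finset.mem_univ _, rfl⟩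
  obtain ⟨t, hct, hct_uniq⟩ := S4.source_edge hfl hcA
  -- the transit point c - 1
  rw [IsTransitPoint, transitSet, Finset.mem_sdiff] at htr
  obtain ⟨hv, hnab⟩ := htr
  rw [Finset.mem_union] at hnab
  push_neg at hnab
  obtain ⟨hc1A, hc1B⟩ := hnab
  have hc1cards : (beginsAt E (c - 1)).card = 1 ∧ (endsAt E (c - 1)).card = 1 := by
    rcases hfl.transit (c - 1) hc1A hc1B with ⟨h1, h2⟩ | h
    · exfalso
      rw [Finset.mem_union] at hv
      rcases hv with h | h <;> obtain ⟨e, he, he2⟩ := Finset.mem_image.mp h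
      · have : e ∈ beginsAt E (c - 1) := Finset.mem_filter.mpr ⟨he, he2⟩
        rw [h1] at this
        exact absurd this (Finset.notMem_empty _)
      · have : e ∈ endsAt E (c - 1) := Finset.mem_filter.mpr ⟨he, he2⟩
        rw [h2] at this
        exact absurd this (Finset.notMem_empty _)
    · exact h
  obtain ⟨u, hc1u, hc1u_uniq⟩ := S4.out_edge hc1cards.1
  obtain ⟨es, hesE, hes2⟩ : ∃ e ∈ E, e.2 = c - 1 := by
    have h : (endsAt E (c - 1)).Nonempty := Finset.card_pos.mp (by omega)
    obtain ⟨e, he⟩ := h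
    exact ⟨e, (Finset.mem_filter.mp he).1, (Finset.mem_filter.mp he).2⟩
  have hs_lt : es.1 < c - 1 := by have := hlt _ hesE; omega
  -- basic inequalities
  have hct_lt : c < t := hlt _ hct
  have hcu_lt : c - 1 < u := hlt _ hc1u
  have hu_ne_c : u ≠ c := by
    intro h
    have hmem : (c - 1, u) ∈ endsAt E c := Finset.mem_filter.mpr ⟨hc1u, h⟩
    rw [hfl.source_in c hcA] at hmem
    exact absurd hmem (Finset.notMem_empty _)
  have hu_gt : c < u := by omega
  have ht_ne_u : t ≠ u := by
    intro h
    have h2 := hIU _ hct _ hc1u h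
    simp only [Prod.mk.injEq] at h2
    omega
  have ht_nA : t ∉ srcSet a := by
    intro h
    have hmem : (c, t) ∈ endsAt E t := Finset.mem_filter.mpr ⟨hct, rfl⟩
    rw [hfl.source_in t h] at hmem
    exact absurd hmem (Finset.notMem_empty _)
  have hu_nA : u ∉ srcSet a := by
    intro h
    have hmem : (c - 1, u) ∈ endsAt E u := Finset.mem_filter.mpr ⟨hc1u, rfl⟩
    rw [hfl.source_in u h] at hmem
    exact absurd hmem (Finset.notMem_empty _)
  have hci : c ≤ i := by rw [hc_def]; exact hai _
  have hc_nB : c ∉ srcSet b := by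
    intro h
    obtain ⟨j, _, hj⟩ := Finset.mem_image.mp h
    have := hbi j
    omega
  -- the new flow E'
  obtain ⟨E', hE'def⟩ : ∃ E' : FlowGraph,
      E' = insert (c, u) (insert (c - 1, t) ((E.erase (c, t)).erase (c - 1, u))) := ⟨_, rfl⟩
  have hmemE' : ∀ e : ℤ × ℤ,
      e ∈ E' ↔ e = (c, u) ∨ e = (c - 1, t) ∨ (e ∈ E ∧ e ≠ (c, t) ∧ e ≠ (c - 1, u)) := by
    intro e
    rw [hE'def]
    simp only [Finset.mem_insert, Finset.mem_erase]
    tauto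
  have hB1 : beginsAt E' c = {(c, u)} := by
    ext e
    simp only [beginsAt, Finset.mem_filter, Finset.mem_singleton]
    constructor
    · rintro ⟨he, h1⟩
      rcases (hmemE' e).mp he with rfl | rfl | ⟨heE, hne1, _⟩
      · rfl
      · exfalso; have h2 : c - 1 = c := h1; omega
      · exact absurd (hct_uniq e heE h1) hne1
    · rintro rfl
      exact ⟨(hmemE' _).mpr (Or.inl rfl), rfl⟩
  have hB2 : beginsAt E' (c - 1) = {(c - 1, t)} := by
    ext e
    simp only [beginsAt, Finset.mem_filter, Finset.mem_singleton]
    constructor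
    · rintro ⟨he, h1⟩
      rcases (hmemE' e).mp he with rfl | rfl | ⟨heE, _, hne2⟩
      · exfalso; have h2 : c = c - 1 := h1; omega
      · rfl
      · exact absurd (hc1u_uniq e heE h1) hne2
    · rintro rfl
      exact ⟨(hmemE' _).mpr (Or.inr (Or.inl rfl)), rfl⟩
  have hB3 : ∀ r, r ≠ c → r ≠ c - 1 → beginsAt E' r = beginsAt E r := by
    intro r hr1 hr2
    ext e
    simp only [beginsAt, Finset.mem_filter]
    constructor
    · rintro ⟨he, h1⟩
      rcases (hmemE' e).mp he with rfl | rfl | ⟨heE, _, _⟩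
      · exfalso; have h2 : c = r := h1; exact hr1 h2.symm
      · exfalso; have h2 : c - 1 = r := h1; exact hr2 h2.symm
      · exact ⟨heE, h1⟩
    · rintro ⟨heE, h1⟩
      refine ⟨(hmemE' e).mpr (Or.inr (Or.inr ⟨heE, ?_, ?_⟩)), h1⟩
      · rintro rfl; exact hr1 h1.symm
      · rintro rfl; exact hr2 h1.symm
  have het_uniq : ∀ e ∈ E, e.2 = t → e = (c, t) := fun e he h2 => hIU e he _ hct h2
  have heu_uniq : ∀ e ∈ E, e.2 = u → e = (c - 1, u) := fun e he h2 => hIU e he _ hc1u h2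
  have hE1' : endsAt E' t = {(c - 1, t)} := by
    ext e
    simp only [endsAt, Finset.mem_filter, Finset.mem_singleton]
    constructor
    · rintro ⟨he, h1⟩
      rcases (hmemE' e).mp he with rfl | rfl | ⟨heE, hne1, _⟩
      · exfalso; have h2 : u = t := h1; omega
      · rfl
      · exact absurd (het_uniq e heE h1) hne1
    · rintro rfl
      exact ⟨(hmemE' _).mpr (Or.inr (Or.inl rfl)), rfl⟩
  have hE2' : endsAt E' u = {(c, u)} := by
    ext e
    simp only [endsAt, Finset.mem_filter, Finset.mem_singleton]
    constructor
    · rintro ⟨he, h1⟩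
      rcases (hmemE' e).mp he with rfl | rfl | ⟨heE, _, hne2⟩
      · rfl
      · exfalso; have h2 : t = u := h1; omega
      · exact absurd (heu_uniq e heE h1) hne2
    · rintro rfl
      exact ⟨(hmemE' _).mpr (Or.inl rfl), rfl⟩
  have hE3' : ∀ r, r ≠ t → r ≠ u → endsAt E' r = endsAt E r := by
    intro r hr1 hr2
    ext e
    simp only [endsAt, Finset.mem_filter]
    constructor
    · rintro ⟨he, h1⟩
      rcases (hmemE' e).mp he with rfl | rfl | ⟨heE, _, _⟩
      · exfalso; have h2 : u = r := h1; exact hr2 h2.symm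
      · exfalso; have h2 : t = r := h1; exact hr1 h2.symm
      · exact ⟨heE, h1⟩
    · rintro ⟨heE, h1⟩
      refine ⟨(hmemE' e).mpr (Or.inr (Or.inr ⟨heE, ?_, ?_⟩)), h1⟩
      · rintro rfl; exact hr1 h1.symm
      · rintro rfl; exact hr2 h1.symm
  have hflE' : IsFlow E' (srcSet a) (srcSet b) := by
    refine ⟨?_, hfl.disjAB, ?_, ?_, ?_, ?_, ?_⟩
    · intro e he
      rcases (hmemE' e).mp he with rfl | rfl | ⟨heE, _, _⟩
      · exact hu_gt
      · show c - 1 < t; omega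
      · exact hlt e heE
    · intro x hx
      by_cases h1 : x = c
      · rw [h1, hB1]; simp
      · have h2 : x ≠ c - 1 := by
          obtain ⟨j, _, hj⟩ := Finset.mem_image.mp hx
          rw [← hj]; exact hns j
        rw [hB3 x h1 h2]
        exact hfl.source_out x hx
    · intro x hx
      have h1 : x ≠ t := by intro h; rw [h] at hx; exact ht_nA hx
      have h2 : x ≠ u := by intro h; rw [h] at hx; exact hu_nA hx
      rw [hE3' x h1 h2]
      exact hfl.source_in x hx
    · intro x hx
      by_cases h1 : x = t
      · rw [h1, hE1']; simp
      by_cases h2 : x = u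
      · rw [h2, hE2']; simp
      rw [hE3' x h1 h2]
      exact hfl.sink_in x hx
    · intro x hx
      have h1 : x ≠ c := by intro h; rw [h] at hx; exact hc_nB hx
      have h2 : x ≠ c - 1 := by intro h; rw [h] at hx; exact hc1B hx
      rw [hB3 x h1 h2]
      exact hfl.sink_out x hx
    · intro r hrA hrB
      by_cases hr1 : r = c - 1
      · subst hr1
        right
        constructor
        · rw [hB2]; simp
        · rw [hE3' _ (by omega) (by omega)]
          exact hc1cards.2
      by_cases hr3 : r = t
      · rw [hr3] at hrB ⊢
        right
        have hbt : (beginsAt E t).card = 1 := by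
          rcases hfl.transit t ht_nA hrB with ⟨_, h4⟩ | ⟨h3, _⟩
          · exfalso
            have hmem : (c, t) ∈ endsAt E t := Finset.mem_filter.mpr ⟨hct, rfl⟩
            rw [h4] at hmem
            exact absurd hmem (Finset.notMem_empty _)
          · exact h3
        constructor
        · rw [hB3 _ (by omega) (by omega)]; exact hbt
        · rw [hE1']; simp
      by_cases hr4 : r = u
      · rw [hr4] at hrB ⊢
        right
        have hbu : (beginsAt E u).card = 1 := by
          rcases hfl.transit u hu_nA hrB with ⟨_, h4⟩ | ⟨h3, _⟩
          · exfalso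
            have hmem : (c - 1, u) ∈ endsAt E u := Finset.mem_filter.mpr ⟨hc1u, rfl⟩
            rw [h4] at hmem
            exact absurd hmem (Finset.notMem_empty _)
          · exact h3
        constructor
        · rw [hB3 _ (by omega) (by omega)]; exact hbu
        · rw [hE2']; simp
      have hr2 : r ≠ c := by intro h; rw [h] at hrA; exact hrA hcA
      rw [hB3 r hr2 hr1, hE3' r hr3 hr4]
      exact hfl.transit r hrA hrB
  have hverts : (E'.image Prod.fst ∪ E'.image Prod.snd) = (E.image Prod.fst ∪ E.image Prod.snd) := by
    ext x
    simp only [Finset.mem_union, Finset.mem_image]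
    constructor
    · rintro (⟨e, he, rfl⟩ | ⟨e, he, rfl⟩)
      · rcases (hmemE' e).mp he with rfl | rfl | ⟨heE, _, _⟩
        · exact Or.inl ⟨(c, t), hct, rfl⟩
        · exact Or.inl ⟨(c - 1, u), hc1u, rfl⟩
        · exact Or.inl ⟨e, heE, rfl⟩
      · rcases (hmemE' e).mp he with rfl | rfl | ⟨heE, _, _⟩
        · exact Or.inr ⟨(c - 1, u), hc1u, rfl⟩
        · exact Or.inr ⟨(c, t), hct, rfl⟩
        · exact Or.inr ⟨e, heE, rfl⟩
    · rintro (⟨e, he, rfl⟩ | ⟨e, he, rfl⟩)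
      · by_cases h1 : e = (c, t)
        · exact Or.inl ⟨(c, u), (hmemE' _).mpr (Or.inl rfl), by rw [h1]⟩
        by_cases h2 : e = (c - 1, u)
        · exact Or.inl ⟨(c - 1, t), (hmemE' _).mpr (Or.inr (Or.inl rfl)), by rw [h2]⟩
        · exact Or.inl ⟨e, (hmemE' _).mpr (Or.inr (Or.inr ⟨he, h1, h2⟩)), rfl⟩
      · by_cases h1 : e = (c, t)
        · exact Or.inr ⟨(c - 1, t), (hmemE' _).mpr (Or.inr (Or.inl rfl)), by rw [h1]⟩
        by_cases h2 : e = (c - 1, u)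
        · exact Or.inr ⟨(c, u), (hmemE' _).mpr (Or.inl rfl), by rw [h2]⟩
        · exact Or.inr ⟨e, (hmemE' _).mpr (Or.inr (Or.inr ⟨he, h1, h2⟩)), rfl⟩
  have htseq : transitSet E' (srcSet a) (srcSet b) = transitSet E (srcSet a) (srcSet b) := by
    rw [transitSet, transitSet, hverts]
  have hInFE' : InF i a b E' := by
    refine ⟨hflE', fun r hr => hbd r ?_⟩
    rwa [IsTransitPoint, htseq] at hr
  have hneE' : E' ≠ E := by
    intro h
    have hcu : (c, u) ∈ E' := (hmemE' _).mpr (Or.inl rfl)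
    rw [h] at hcu
    have h2 := hct_uniq _ hcu rfl
    simp only [Prod.mk.injEq] at h2
    omega
  have hcuE' : (c, u) ∈ E' := (hmemE' _).mpr (Or.inl rfl)
  have hc1tE' : (c - 1, t) ∈ E' := (hmemE' _).mpr (Or.inr (Or.inl rfl))
  have hcuE'_uniq : ∀ e ∈ E', e.1 = c → e = (c, u) := by
    intro e he h1
    have hmem : e ∈ beginsAt E' c := Finset.mem_filter.mpr ⟨he, h1⟩
    rw [hB1] at hmem
    exact Finset.mem_singleton.mp hmem
  have hL3E : L3g c E = insert (c - 1, t) (E.erase (c, t)) := S4.L3g_eq hct hct_uniq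
  have hL3E' : L3g c E' = insert (c - 1, u) (E'.erase (c, u)) := S4.L3g_eq hcuE' hcuE'_uniq
  have hL3eq : L3g c E' = L3g c E := by
    rw [hL3E, hL3E']
    ext e
    simp only [Finset.mem_insert, Finset.mem_erase]
    constructor
    · rintro (rfl | ⟨hne, he⟩)
      · refine Or.inr ⟨?_, hc1u⟩
        intro h
        simp only [Prod.mk.injEq] at h
        omega
      · rcases (hmemE' e).mp he with rfl | rfl | ⟨heE, hne1, _⟩
        · exact absurd rfl hne
        · exact Or.inl rfl
        · exact Or.inr ⟨hne1, heE⟩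
    · rintro (rfl | ⟨hne, he⟩)
      · refine Or.inr ⟨?_, hc1tE'⟩
        intro h
        simp only [Prod.mk.injEq] at h
        omega
      · by_cases h2 : e = (c - 1, u)
        · exact Or.inl h2
        · refine Or.inr ⟨?_, (hmemE' e).mpr (Or.inr (Or.inr ⟨he, hne, h2⟩))⟩
          intro h
          rw [h] at he
          have h3 := hct_uniq _ he rfl
          simp only [Prod.mk.injEq] at h3
          omega
  have hnc1tE : (c - 1, t) ∉ E := by
    intro h
    have h2 := hIU _ h _ hct rfl
    simp only [Prod.mk.injEq] at h2
    omega
  have hrecE : E = insert (c, t) ((L3g c E).erase (c - 1, t)) :=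
    S4.L3g_reconstruct hct hct_uniq hnc1tE
  have hnc1uE' : (c - 1, u) ∉ E' := by
    intro h
    rcases (hmemE' _).mp h with h1 | h1 | ⟨_, _, h3⟩
    · simp only [Prod.mk.injEq] at h1; omega
    · simp only [Prod.mk.injEq] at h1; omega
    · exact h3 rfl
  have hrecE' : E' = insert (c, u) ((L3g c E').erase (c - 1, u)) :=
    S4.L3g_reconstruct hcuE' hcuE'_uniq hnc1uE'
  have huniq : ∀ F : FlowGraph, InF i a b F → F ≠ E → L3g c F = L3g c E → F = E' := by
    intro F hInFF hneF hL3F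
    obtain ⟨hflF, _⟩ := hInFF
    have hIUF : S4.InUniq F := S4.flow_inUniq hflF
    obtain ⟨t', hct', hct'_uniq⟩ := S4.source_edge hflF hcA
    have hnt' : (c - 1, t') ∉ F := by
      intro h
      have h2 := hIUF _ h _ hct' rfl
      simp only [Prod.mk.injEq] at h2
      omega
    have hrecF : F = insert (c, t') ((L3g c F).erase (c - 1, t')) :=
      S4.L3g_reconstruct hct' hct'_uniq hnt'
    have hmemt' : (c - 1, t') ∈ L3g c E := by
      rw [← hL3F, S4.L3g_eq hct' hct'_uniq]
      exact Finset.mem_insert_self _ _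
    rw [hL3E, Finset.mem_insert] at hmemt'
    rcases hmemt' with h | h
    · exfalso
      apply hneF
      simp only [Prod.mk.injEq] at h
      rw [hrecF, h.2, hL3F, ← hrecE]
    · have h2 := hc1u_uniq _ (Finset.mem_of_mem_erase h) rfl
      simp only [Prod.mk.injEq] at h2
      rw [hrecF, h2.2, hL3F, ← hL3eq, ← hrecE']
  refine ⟨⟨E', ⟨hInFE', hneE', hL3eq⟩, fun F hF => huniq F hF.1 hF.2.1 hF.2.2⟩, ?_⟩
  -- sign part
  intro F hInFF hneF hL3F σ τ hσ hτ
  have hFE' : F = E' := huniq F hInFF hneF hL3F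
  rw [hFE'] at hτ ⊢
  have hltE' : S4.EdgeLt E' := hflE'.edge_lt
  have hOUE' : S4.OutUniq E' := S4.flow_outUniq hflE'
  obtain ⟨E1, hE1def⟩ : ∃ E1 : FlowGraph, E1 = E.erase (c, t) := ⟨_, rfl⟩
  obtain ⟨D, hDdef⟩ : ∃ D : FlowGraph, D = E1.erase (c - 1, u) := ⟨_, rfl⟩
  have hE1sub : E1 ⊆ E := by rw [hE1def]; exact Finset.erase_subset _ _
  have hDsub1 : D ⊆ E1 := by rw [hDdef]; exact Finset.erase_subset _ _
  have hDsubE : D ⊆ E := fun e he => hE1sub (hDsub1 he)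
  have hOU1 : S4.OutUniq E1 := S4.outUniq_mono hE1sub hOU
  have hlt1 : S4.EdgeLt E1 := S4.edgeLt_mono hE1sub hlt
  have hOUD : S4.OutUniq D := S4.outUniq_mono hDsub1 hOU1
  have hltD : S4.EdgeLt D := S4.edgeLt_mono hDsub1 hlt1
  have hDsubE' : D ⊆ E' := by
    intro e he
    rw [hDdef, Finset.mem_erase, hE1def, Finset.mem_erase] at he
    exact (hmemE' e).mpr (Or.inr (Or.inr ⟨he.2.2, he.2.1, he.1⟩))
  have hc1uE1 : (c - 1, u) ∈ E1 := by
    rw [hE1def]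
    refine Finset.mem_erase.mpr ⟨?_, hc1u⟩
    intro h
    simp only [Prod.mk.injEq] at h
    omega
  have hterm : ∀ j, S4.term E (a j) = b (σ j) := S4.linking_term hfl hσ
  obtain ⟨U, hUdef⟩ : ∃ U : ℤ, U = S4.term E (c - 1) := ⟨_, rfl⟩
  have hU_step : U = S4.term E u := by rw [hUdef]; exact S4.term_step hOU hlt hc1u
  have hUB : U ∈ srcSet b := by rw [hUdef]; exact S4.term_sink hfl ⟨(c - 1, u), hc1u, rfl⟩
  obtain ⟨k₀, _, hk₀⟩ := Finset.mem_image.mp hUB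
  obtain ⟨j₀, hj₀def⟩ : ∃ j₀ : Fin (q + 1), j₀ = σ⁻¹ k₀ := ⟨_, rfl⟩
  have hσj₀ : σ j₀ = k₀ := by rw [hj₀def]; exact Equiv.apply_symm_apply σ k₀
  -- reverse analysis: the source linked to c - 1
  have hOUR : S4.OutUniq (S4.revG E) := S4.outUniq_revG hIU
  have hltR : S4.EdgeLt (S4.revG E) := S4.edgeLt_revG hlt
  have hsE : (es.1, c - 1) ∈ E := by rwa [show (es.1, c - 1) = es from Prod.ext rfl hes2.symm]
  have hRs : (-(c - 1), -es.1) ∈ S4.revG E := S4.mem_revG.mpr (by simpa using hsE)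
  obtain ⟨P, hPdef⟩ : ∃ P : ℤ, P = S4.term (S4.revG E) (-(c - 1)) := ⟨_, rfl⟩
  have hP_step : P = S4.term (S4.revG E) (-es.1) := by
    rw [hPdef]; exact S4.term_step hOUR hltR hRs
  have hP_ge : -es.1 ≤ P := by rw [hP_step]; exact S4.term_ge hOUR hltR _
  have hP_gt : -(c - 1) < P := by omega
  have hnoOutP : ¬ ∃ e ∈ S4.revG E, e.1 = P := by
    rw [hPdef]; exact S4.term_noOut hOUR hltR (-(c - 1))
  have hendP : ∃ e ∈ S4.revG E, e.2 = P := by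
    rcases S4.term_endsAt hOUR hltR (-(c - 1)) with h | h
    · rw [hPdef]; exact h
    · exfalso; rw [← hPdef] at h; omega
  have hp_out : ∃ e ∈ E, e.1 = -P := by
    obtain ⟨e, heR, he2⟩ := hendP
    have hpair : (e.1, P) ∈ S4.revG E := by rwa [show (e.1, P) = e from Prod.ext rfl he2.symm]
    exact ⟨(-P, -e.1), S4.mem_revG.mp hpair, rfl⟩
  have hp_noIn : ∀ e ∈ E, e.2 ≠ -P := by
    intro e he h2
    have hpair : (e.1, -P) ∈ E := by rwa [show (e.1, -P) = e from Prod.ext rfl h2.symm]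
    have hmem : ((P : ℤ), -e.1) ∈ S4.revG E := S4.mem_revG.mpr (by simpa using hpair)
    exact hnoOutP ⟨(P, -e.1), hmem, rfl⟩
  have hpA : -P ∈ srcSet a := by
    by_contra hA
    by_cases hB : -P ∈ srcSet b
    · have h1 := hfl.sink_in _ hB
      have h2 : (endsAt E (-P)).Nonempty := Finset.card_pos.mp (by omega)
      obtain ⟨e, he⟩ := h2
      exact hp_noIn e (Finset.mem_filter.mp he).1 (Finset.mem_filter.mp he).2
    · rcases hfl.transit _ hA hB with ⟨h1, _⟩ | ⟨_, h2⟩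
      · obtain ⟨e, he, he1⟩ := hp_out
        have hmem : e ∈ beginsAt E (-P) := Finset.mem_filter.mpr ⟨he, he1⟩
        rw [h1] at hmem
        exact absurd hmem (Finset.notMem_empty _)
      · have h3 : (endsAt E (-P)).Nonempty := Finset.card_pos.mp (by omega)
        obtain ⟨e, he⟩ := h3
        exact hp_noIn e (Finset.mem_filter.mp he).1 (Finset.mem_filter.mp he).2
  obtain ⟨j₁, _, hj₁⟩ := Finset.mem_image.mp hpA
  have hlinkRP : Linked (S4.revG E) (-(c - 1)) P := by
    rw [hPdef]; exact S4.term_linked hOUR hltR _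
  have hlinkc1p : Linked E (c - 1) (-P) := by
    have h := S4.linked_of_revG (F := E) hlinkRP
    simpa using h
  have hstuckU : S4.term E U = U := by
    rw [hUdef]
    exact S4.term_stuck (S4.term_noOut hOU hlt (c - 1))
  have hlinkc1U : Linked E (c - 1) U := by rw [hUdef]; exact S4.term_linked hOU hlt _
  have hj₁U : b (σ j₁) = U := by
    have h1 : Linked E (a j₁) U := by
      rw [hj₁]
      exact Relation.ReflTransGen.trans (S4.linked_symm hlinkc1p) hlinkc1U
    have h2 := S4.linked_term hOU hlt h1
    rw [hterm j₁, hstuckU] at h2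
    exact h2
  have hj₁j₀ : j₁ = j₀ := by
    have h1 : σ j₁ = k₀ := hb.injective (by rw [hj₁U]; exact hk₀.symm)
    rw [hj₀def, ← h1]
    exact (Equiv.symm_apply_apply σ j₁).symm
  have haj₀ : a j₀ = -P := by rw [← hj₁j₀]; exact hj₁
  have hj₀ne : j₀ ≠ Fin.last q := by
    intro h
    have h1 : a j₀ = c := by rw [h, ← hc_def]
    omega
  have hT : S4.term E t = b (σ (Fin.last q)) := by
    rw [← S4.term_step hOU hlt hct, hc_def]
    exact hterm (Fin.last q)
  -- term computations in D
  have h_tEu : S4.term E1 u = S4.term E u := by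
    rw [hE1def]
    exact S4.term_erase_lt hOU hlt hct hu_gt
  have h_tDu : S4.term D u = S4.term E u := by
    rw [hDdef, S4.term_erase_lt hOU1 hlt1 hc1uE1 hcu_lt]
    exact h_tEu
  have h_tDt : S4.term D t = S4.term E t := by
    rw [hDdef, S4.term_erase_lt hOU1 hlt1 hc1uE1 (show (c : ℤ) - 1 < t by omega), hE1def,
      S4.term_erase_lt hOU hlt hct hct_lt]
  have hlink_last : Linked E' c U := by
    have h1 : Linked D u U := by
      have h := S4.term_linked hOUD hltD u
      rwa [h_tDu, ← hU_step] at h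
    exact Relation.ReflTransGen.head (Or.inl hcuE') (S4.linked_mono hDsubE' h1)
  -- reverse computation in D
  have hIUD : S4.InUniq D := S4.inUniq_mono hDsubE hIU
  have hOURD : S4.OutUniq (S4.revG D) := S4.outUniq_revG hIUD
  have hltRD : S4.EdgeLt (S4.revG D) := S4.edgeLt_revG hltD
  have hmemtc : ((-t : ℤ), -c) ∈ S4.revG E := S4.mem_revG.mpr (by simpa using hct)
  have hmemuc1 : ((-u : ℤ), -(c - 1)) ∈ (S4.revG E).erase (-t, -c) := by
    refine Finset.mem_erase.mpr ⟨?_, S4.mem_revG.mpr (by simpa using hc1u)⟩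
    intro h
    simp only [Prod.mk.injEq] at h
    omega
  have h_tRD : S4.term (S4.revG D) (-(c - 1)) = P := by
    have e1 : S4.revG D = ((S4.revG E).erase (-t, -c)).erase (-u, -(c - 1)) := by
      rw [hDdef, hE1def, S4.revG_erase, S4.revG_erase]
    rw [e1,
      S4.term_erase_lt (S4.outUniq_mono (Finset.erase_subset _ _) hOUR)
        (S4.edgeLt_mono (Finset.erase_subset _ _) hltR) hmemuc1 (show (-u : ℤ) < -(c - 1) by omega),
      S4.term_erase_lt hOUR hltR hmemtc (show (-t : ℤ) < -(c - 1) by omega)]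
    exact hPdef.symm
  have hlink_j₀c1 : Linked E' (a j₀) (c - 1) := by
    have h1 : Linked (S4.revG D) (-(c - 1)) P := by
      have h := S4.term_linked hOURD hltRD (-(c - 1))
      rwa [h_tRD] at h
    have h2 : Linked D (c - 1) (-P) := by
      have h := S4.linked_of_revG (F := D) h1
      simpa using h
    have h3 : Linked D (a j₀) (c - 1) := by
      rw [haj₀]
      exact S4.linked_symm h2
    exact S4.linked_mono hDsubE' h3
  have hlink_j₀ : Linked E' (a j₀) (b (σ (Fin.last q))) := by
    have h1 : Linked E' t (b (σ (Fin.last q))) := by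
      have h := S4.term_linked hOUD hltD t
      rw [h_tDt, hT] at h
      exact S4.linked_mono hDsubE' h
    exact Relation.ReflTransGen.trans
      (Relation.ReflTransGen.tail hlink_j₀c1 (Or.inl hc1tE')) h1
  have hlink_other : ∀ j, j ≠ j₀ → j ≠ Fin.last q → Linked E' (a j) (b (σ j)) := by
    intro j hjj₀ hjlast
    have h1 : S4.term E1 (a j) = b (σ j) := by
      rcases S4.term_erase hOU hlt hct (a j) with h | ⟨_, h2⟩
      · rw [← hE1def] at h
        rw [h, hterm j]
      · exfalso
        have h2' : S4.term E (a j) = S4.term E t := h2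
        rw [hterm j, hT] at h2'
        exact hjlast (σ.injective (hb.injective h2'))
    have h2 : S4.term D (a j) = b (σ j) := by
      rcases S4.term_erase hOU1 hlt1 hc1uE1 (a j) with h | ⟨_, h2⟩
      · rw [← hDdef] at h
        rw [h, h1]
      · exfalso
        have h2' : S4.term E1 (a j) = S4.term E1 u := h2
        rw [h1, h_tEu, ← hU_step, ← hk₀] at h2'
        have h3 := hb.injective h2'
        apply hjj₀
        rw [hj₀def, ← h3]
        exact (Equiv.symm_apply_apply σ j).symm
    have h := S4.term_linked hOUD hltD (a j)
    rw [h2] at h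
    exact S4.linked_mono hDsubE' h
  have hτ₀ : IsLinkingPerm E' a b (σ * Equiv.swap j₀ (Fin.last q)) := by
    intro j
    simp only [Equiv.Perm.mul_apply]
    by_cases h1 : j = j₀
    · subst h1
      rw [Equiv.swap_apply_left]
      exact hlink_j₀
    by_cases h2 : j = Fin.last q
    · subst h2
      rw [Equiv.swap_apply_right]
      have h3 : b (σ j₀) = U := by rw [hσj₀]; exact hk₀
      rw [h3, ← hc_def]
      exact hlink_last
    · rw [Equiv.swap_apply_of_ne_of_ne h1 h2]
      exact hlink_other j h1 h2
  have hττ₀ : τ = σ * Equiv.swap j₀ (Fin.last q) := by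
    apply Equiv.ext
    intro j
    apply hb.injective
    rw [← S4.linking_term hflE' hτ j, ← S4.linking_term hflE' hτ₀ j]
  have hsign : (Equiv.Perm.sign τ : ℤ) = -(Equiv.Perm.sign σ : ℤ) := by
    rw [hττ₀, Equiv.Perm.sign_mul, Equiv.Perm.sign_swap hj₀ne]
    simp
  simp only [signValue]
  rw [htseq, hsign]
  ring
end

section
/- Let Γ ∈ 𝓕_i(a_1,…,a_q; b_1,…,b_q), suppose i + 1 is not a sink of Γ and i is a transit point of Γ. Let M_1(Γ) be the graph obtained from Γ by replacing its unique edge of the form (s, i) by (s, i + 1). Then M_1(Γ) ∈ 𝓕_i(a_1,…,a_q, i; b_1,…,b_q, i + 1) and sgn_i(M_1(Γ)) = −sgn_i(Γ). -/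
open Finset

section Aux

/-- Directed reachability in a flow graph. -/
def DP (E : FlowGraph) (x y : ℤ) : Prop :=
  Relation.ReflTransGen (fun u v => (u, v) ∈ E) x y

lemma dp_le {E : FlowGraph} (hlt : ∀ e ∈ E, e.1 < e.2) {x y : ℤ} (h : DP E x y) : x ≤ y := by
  induction h with
  | refl => exact le_refl _
  | tail _ hbc ih => exact le_trans ih (le_of_lt (hlt _ hbc))

lemma dp_mono {E F : FlowGraph} (h : E ⊆ F) {x y : ℤ} (hd : DP E x y) : DP F x y :=
  Relation.ReflTransGen.mono (fun _ _ hu => h hu) x y hd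

lemma dp_linked {E : FlowGraph} {x y : ℤ} (h : DP E x y) : Linked E x y :=
  Relation.ReflTransGen.mono (fun _ _ hu => Or.inl hu) x y h

lemma card_beginsAt_le {E : FlowGraph} {A B : Finset ℤ} (hf : IsFlow E A B) (r : ℤ) :
    (beginsAt E r).card ≤ 1 := by
  by_cases hA : r ∈ A
  · exact le_of_eq (hf.source_out r hA)
  by_cases hB : r ∈ B
  · simp [hf.sink_out r hB]
  rcases hf.transit r hA hB with ⟨h1, _⟩ | ⟨h1, _⟩ <;> simp [h1]

lemma out_unique {E : FlowGraph} {A B : Finset ℤ} (hf : IsFlow E A B) {r x y : ℤ}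
    (h1 : (r, x) ∈ E) (h2 : (r, y) ∈ E) : x = y := by
  have m1 : (r, x) ∈ beginsAt E r := Finset.mem_filter.mpr ⟨h1, rfl⟩
  have m2 : (r, y) ∈ beginsAt E r := Finset.mem_filter.mpr ⟨h2, rfl⟩
  have h := Finset.card_le_one.mp (card_beginsAt_le hf r) _ m1 _ m2
  exact congrArg Prod.snd h

lemma sink_dp {E : FlowGraph} {A B : Finset ℤ} (hf : IsFlow E A B) {b0 x : ℤ}
    (hb : b0 ∈ B) (h : Linked E x b0) : DP E x b0 := by
  have h' : Linked E b0 x := linked_symm h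
  clear h
  induction h' with
  | refl => exact Relation.ReflTransGen.refl
  | @tail m c _ hbc ih =>
    rcases hbc with hcd | hdc
    · rcases Relation.ReflTransGen.cases_head ih with heq | ⟨w, hw, hwb⟩
      · exfalso
        have hm : (m, c) ∈ beginsAt E m := Finset.mem_filter.mpr ⟨hcd, rfl⟩
        rw [heq, hf.sink_out _ hb] at hm
        exact absurd hm (Finset.notMem_empty _)
      · rw [out_unique hf hcd hw]; exact hwb
    · exact Relation.ReflTransGen.head hdc ih

def castEmb (q : ℕ) : Fin q ↪ Fin (q + 1) := ⟨Fin.castSucc, Fin.castSucc_injective q⟩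

lemma sink_unique_s5 {E : FlowGraph} {A B : Finset ℤ} (hf : IsFlow E A B) {b1 b2 : ℤ}
    (h1 : b1 ∈ B) (h2 : b2 ∈ B) (h : Linked E b1 b2) : b1 = b2 := by
  rcases Relation.ReflTransGen.cases_head (sink_dp hf h2 h) with heq | ⟨w, hw, _⟩
  · exact heq
  · exfalso
    have hm : (b1, w) ∈ beginsAt E b1 := Finset.mem_filter.mpr ⟨hw, rfl⟩
    rw [hf.sink_out _ h1] at hm
    exact absurd hm (Finset.notMem_empty _)

end Aux

/-- Lemma 15: let `Γ ∈ 𝓕_i(a_1,…,a_q; b_1,…,b_q)` with `i + 1` not a sink and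
`i` a transit point of `Γ`. Then `M_1(Γ)` (replacing the edge `(s, i)` by
`(s, i + 1)`) belongs to `𝓕_i(a_1,…,a_q, i; b_1,…,b_q, i + 1)` and has `i`-sign
opposite to that of `Γ`. -/
theorem statement5 {q : ℕ} (i : ℤ) (a b : Fin q → ℤ)
    (ha : StrictMono a) (hb : StrictAnti b)
    (hai : ∀ j, a j ≤ i) (hbi : ∀ j, i < b j)
    (E : FlowGraph) (hE : InF i a b E)
    (hsink : ∀ j, b j ≠ i + 1)
    (htr : IsTransitPoint E (srcSet a) (srcSet b) i)
    (s : ℤ) (hs : (s, i) ∈ E) :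
    InF i (Fin.snoc a i) (Fin.snoc b (i + 1)) (insert (s, i + 1) (E.erase (s, i))) ∧
    ∀ (σ : Equiv.Perm (Fin q)) (τ : Equiv.Perm (Fin (q + 1))),
      IsLinkingPerm E a b σ →
      IsLinkingPerm (insert (s, i + 1) (E.erase (s, i)))
        (Fin.snoc a i) (Fin.snoc b (i + 1)) τ →
      signValue i (Fin.snoc b (i + 1)) τ (insert (s, i + 1) (E.erase (s, i)))
          (srcSet (Fin.snoc a i)) (srcSet (Fin.snoc b (i + 1)))
        = - signValue i b σ E (srcSet a) (srcSet b) := by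
  obtain ⟨hf, hbd⟩ := hE
  set E' : FlowGraph := insert (s, i + 1) (E.erase (s, i)) with hE'def
  have hsi : s < i := hf.edge_lt _ hs
  have htr' : i ∈ transitSet E (srcSet a) (srcSet b) := htr
  have hmem := htr'
  rw [transitSet, Finset.mem_sdiff] at hmem
  obtain ⟨htouch_i, hiAB⟩ := hmem
  rw [Finset.mem_union] at hiAB
  push_neg at hiAB
  obtain ⟨hiA, hiB⟩ := hiAB
  have hmemA : ∀ x, x ∈ srcSet a ↔ ∃ j, a j = x := by intro x; simp [srcSet]
  have hmemB : ∀ x, x ∈ srcSet b ↔ ∃ j, b j = x := by intro x; simp [srcSet]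
  have hi1A : i + 1 ∉ srcSet a := by
    rw [hmemA]; rintro ⟨j, hj⟩; have := hai j; omega
  have hi1B : i + 1 ∉ srcSet b := by
    rw [hmemB]; rintro ⟨j, hj⟩; exact hsink j hj
  have hsi_ends : (s, i) ∈ endsAt E i := Finset.mem_filter.mpr ⟨hs, rfl⟩
  have hend_i : ∀ x, (x, i) ∈ E → x = s := by
    intro x hx
    have m1 : (x, i) ∈ endsAt E i := Finset.mem_filter.mpr ⟨hx, rfl⟩
    have hle : (endsAt E i).card ≤ 1 := by
      rcases hf.transit i hiA hiB with ⟨_, h1⟩ | ⟨_, h1⟩ <;> simp [h1]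
    exact congrArg Prod.fst (Finset.card_le_one.mp hle _ m1 _ hsi_ends)
  have hbegin_i_card : (beginsAt E i).card = 1 := by
    rcases hf.transit i hiA hiB with ⟨_, h1⟩ | ⟨h1, _⟩
    · rw [h1] at hsi_ends; exact absurd hsi_ends (Finset.notMem_empty _)
    · exact h1
  obtain ⟨e0, he0⟩ := Finset.card_eq_one.mp hbegin_i_card
  have he0m : e0 ∈ beginsAt E i := by rw [he0]; exact Finset.mem_singleton_self _
  rw [beginsAt, Finset.mem_filter] at he0m
  obtain ⟨he0E, he0fst⟩ := he0m
  obtain ⟨u0, t0⟩ := e0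
  have hu0 : u0 = i := he0fst
  rw [hu0] at he0E
  have htiE : (i, t0) ∈ E := he0E
  have ht0 : i < t0 := hf.edge_lt _ htiE
  clear he0 he0E he0fst hu0
  have hno_i1 : beginsAt E (i + 1) = ∅ ∧ endsAt E (i + 1) = ∅ := by
    rcases hf.transit (i + 1) hi1A hi1B with h | ⟨_, h2⟩
    · exact h
    · exfalso
      have hpos : (endsAt E (i + 1)).Nonempty := Finset.card_pos.mp (by rw [h2]; norm_num)
      obtain ⟨e, he⟩ := hpos
      rw [endsAt, Finset.mem_filter] at he
      have hmem2 : i + 1 ∈ transitSet E (srcSet a) (srcSet b) := by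
        rw [transitSet, Finset.mem_sdiff]
        refine ⟨Finset.mem_union_right _ (Finset.mem_image.mpr ⟨e, he.1, he.2⟩), ?_⟩
        rw [Finset.mem_union]
        push_neg
        exact ⟨hi1A, hi1B⟩
      have := hbd _ hmem2
      omega
  have hne_i1 : ∀ e ∈ E, e.2 ≠ i + 1 := by
    intro e he h
    have hm : e ∈ endsAt E (i + 1) := Finset.mem_filter.mpr ⟨he, h⟩
    rw [hno_i1.2] at hm; exact absurd hm (Finset.notMem_empty _)
  have hne1_i1 : ∀ e ∈ E, e.1 ≠ i + 1 := by
    intro e he h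
    have hm : e ∈ beginsAt E (i + 1) := Finset.mem_filter.mpr ⟨he, h⟩
    rw [hno_i1.1] at hm; exact absurd hm (Finset.notMem_empty _)
  have hsB : s ∉ srcSet b := by
    intro h
    have hm : (s, i) ∈ beginsAt E s := Finset.mem_filter.mpr ⟨hs, rfl⟩
    rw [hf.sink_out _ h] at hm; exact absurd hm (Finset.notMem_empty _)
  have hmemE' : ∀ e : ℤ × ℤ, e ∈ E' ↔ e = (s, i + 1) ∨ (e ∈ E ∧ e ≠ (s, i)) := by
    intro e
    rw [hE'def, Finset.mem_insert, Finset.mem_erase]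
    tauto
  have hsE' : (s, i + 1) ∈ E' := (hmemE' _).mpr (Or.inl rfl)
  have hlt' : ∀ e ∈ E', e.1 < e.2 := by
    intro e he
    rcases (hmemE' e).mp he with rfl | ⟨heE, _⟩
    · show s < i + 1; omega
    · exact hf.edge_lt e heE
  have hbegins_ne : ∀ r, r ≠ s → beginsAt E' r = beginsAt E r := by
    intro r hr
    ext e
    rw [beginsAt, beginsAt, Finset.mem_filter, Finset.mem_filter]
    constructor
    · rintro ⟨he, h1⟩
      rcases (hmemE' e).mp he with rfl | ⟨heE, _⟩
      · exact absurd h1 (fun h => hr h.symm)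
      · exact ⟨heE, h1⟩
    · rintro ⟨he, h1⟩
      refine ⟨(hmemE' e).mpr (Or.inr ⟨he, ?_⟩), h1⟩
      rintro rfl
      exact hr h1.symm
  have hbegins_s_all : ∀ x, (s, x) ∈ E → x = i := fun x hx => out_unique hf hx hs
  have hbegins_s : beginsAt E' s = {(s, i + 1)} := by
    ext e
    rw [beginsAt, Finset.mem_filter, Finset.mem_singleton]
    constructor
    · rintro ⟨he, h1⟩
      rcases (hmemE' e).mp he with rfl | ⟨heE, hne⟩
      · rfl
      · exfalso
        obtain ⟨u, v⟩ := e
        have hu : u = s := h1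
        subst hu
        have hv := hbegins_s_all v heE
        rw [hv] at hne
        exact hne rfl
    · rintro rfl
      exact ⟨hsE', rfl⟩
  have hends_ne : ∀ r, r ≠ i → r ≠ i + 1 → endsAt E' r = endsAt E r := by
    intro r hri hri1
    ext e
    rw [endsAt, endsAt, Finset.mem_filter, Finset.mem_filter]
    constructor
    · rintro ⟨he, h2⟩
      rcases (hmemE' e).mp he with rfl | ⟨heE, _⟩
      · exact absurd h2 (fun h => hri1 h.symm)
      · exact ⟨heE, h2⟩
    · rintro ⟨he, h2⟩
      refine ⟨(hmemE' e).mpr (Or.inr ⟨he, ?_⟩), h2⟩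
      rintro rfl
      exact hri h2.symm
  have hends_i' : endsAt E' i = ∅ := by
    rw [Finset.eq_empty_iff_forall_notMem]
    intro e he
    rw [endsAt, Finset.mem_filter] at he
    obtain ⟨he, h2⟩ := he
    rcases (hmemE' e).mp he with rfl | ⟨heE, hne⟩
    · have : i + 1 = i := h2
      omega
    · obtain ⟨u, v⟩ := e
      have hv : v = i := h2
      subst hv
      have hu := hend_i u heE
      rw [hu] at hne
      exact hne rfl
  have hends_i1' : ∀ x, (x, i + 1) ∈ E' → x = s := by
    intro x hx
    rcases (hmemE' _).mp hx with h | ⟨heE, _⟩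
    · exact congrArg Prod.fst h
    · exact absurd rfl (hne_i1 _ heE)
  have hends_i1 : endsAt E' (i + 1) = {(s, i + 1)} := by
    ext e
    rw [endsAt, Finset.mem_filter, Finset.mem_singleton]
    constructor
    · rintro ⟨he, h2⟩
      obtain ⟨u, v⟩ := e
      have hv : v = i + 1 := h2
      subst hv
      rw [hends_i1' u he]
    · rintro rfl
      exact ⟨hsE', rfl⟩
  have hA' : srcSet (Fin.snoc a i : Fin (q + 1) → ℤ) = insert i (srcSet a) := by
    ext x
    simp only [srcSet, Finset.mem_image, Finset.mem_univ, true_and, Finset.mem_insert]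
    constructor
    · rintro ⟨j, rfl⟩
      rcases eq_or_ne j (Fin.last q) with rfl | hj
      · left; simp
      · obtain ⟨k, rfl⟩ := Fin.exists_castSucc_eq.mpr hj
        right; exact ⟨k, by simp⟩
    · rintro (rfl | ⟨k, rfl⟩)
      · exact ⟨Fin.last q, by simp⟩
      · exact ⟨k.castSucc, by simp⟩
  have hB' : srcSet (Fin.snoc b (i + 1) : Fin (q + 1) → ℤ) = insert (i + 1) (srcSet b) := by
    ext x
    simp only [srcSet, Finset.mem_image, Finset.mem_univ, true_and, Finset.mem_insert]
    constructor
    · rintro ⟨j, rfl⟩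
      rcases eq_or_ne j (Fin.last q) with rfl | hj
      · left; simp
      · obtain ⟨k, rfl⟩ := Fin.exists_castSucc_eq.mpr hj
        right; exact ⟨k, by simp⟩
    · rintro (rfl | ⟨k, rfl⟩)
      · exact ⟨Fin.last q, by simp⟩
      · exact ⟨k.castSucc, by simp⟩
  have hbinj : Function.Injective (Fin.snoc b (i + 1) : Fin (q + 1) → ℤ) := by
    intro j k hjk
    rcases eq_or_ne j (Fin.last q) with rfl | hj <;> rcases eq_or_ne k (Fin.last q) with rfl | hk
    · rfl
    · obtain ⟨k', rfl⟩ := Fin.exists_castSucc_eq.mpr hk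
      rw [Fin.snoc_last, Fin.snoc_castSucc] at hjk
      exact absurd hjk.symm (hsink k')
    · obtain ⟨j', rfl⟩ := Fin.exists_castSucc_eq.mpr hj
      rw [Fin.snoc_last, Fin.snoc_castSucc] at hjk
      exact absurd hjk (hsink j')
    · obtain ⟨j', rfl⟩ := Fin.exists_castSucc_eq.mpr hj
      obtain ⟨k', rfl⟩ := Fin.exists_castSucc_eq.mpr hk
      rw [Fin.snoc_castSucc, Fin.snoc_castSucc] at hjk
      rw [hb.injective hjk]
  have isflow' : IsFlow E' (insert i (srcSet a)) (insert (i + 1) (srcSet b)) := by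
    constructor
    · exact hlt'
    · rw [Finset.disjoint_left]
      intro x hx
      rcases Finset.mem_insert.mp hx with rfl | hxA
      · rw [Finset.mem_insert]
        push_neg
        exact ⟨by omega, hiB⟩
      · rw [Finset.mem_insert]
        push_neg
        refine ⟨?_, Finset.disjoint_left.mp hf.disjAB hxA⟩
        obtain ⟨j, _, rfl⟩ := Finset.mem_image.mp hxA
        have := hai j; omega
    · intro r hr
      rcases Finset.mem_insert.mp hr with rfl | hrA
      · rw [hbegins_ne r (by omega)]; exact hbegin_i_card
      · rcases eq_or_ne r s with rfl | hrs
        · rw [hbegins_s]; simp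
        · rw [hbegins_ne r hrs]; exact hf.source_out r hrA
    · intro r hr
      rcases Finset.mem_insert.mp hr with rfl | hrA
      · exact hends_i'
      · have h1 : r ≠ i := fun h => hiA (h ▸ hrA)
        have h2 : r ≠ i + 1 := fun h => hi1A (h ▸ hrA)
        rw [hends_ne r h1 h2]; exact hf.source_in r hrA
    · intro r hr
      rcases Finset.mem_insert.mp hr with rfl | hrB
      · rw [hends_i1]; simp
      · have h1 : r ≠ i := fun h => hiB (h ▸ hrB)
        have h2 : r ≠ i + 1 := fun h => hi1B (h ▸ hrB)
        rw [hends_ne r h1 h2]; exact hf.sink_in r hrB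
    · intro r hr
      rcases Finset.mem_insert.mp hr with rfl | hrB
      · rw [hbegins_ne _ (by omega)]; exact hno_i1.1
      · have h2 : r ≠ s := fun h => hsB (h ▸ hrB)
        rw [hbegins_ne r h2]; exact hf.sink_out r hrB
    · intro r hrA' hrB'
      rw [Finset.mem_insert] at hrA' hrB'
      push_neg at hrA' hrB'
      obtain ⟨hri, hrA⟩ := hrA'
      obtain ⟨hri1, hrB⟩ := hrB'
      rcases hf.transit r hrA hrB with ⟨h1, h2⟩ | ⟨h1, h2⟩
      · left
        have hrs : r ≠ s := by
          rintro rfl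
          have hm : (r, i) ∈ beginsAt E r := Finset.mem_filter.mpr ⟨hs, rfl⟩
          rw [h1] at hm; exact absurd hm (Finset.notMem_empty _)
        rw [hbegins_ne r hrs, hends_ne r hri hri1]
        exact ⟨h1, h2⟩
      · right
        rw [hends_ne r hri hri1]
        rcases eq_or_ne r s with rfl | hrs
        · rw [hbegins_s]; exact ⟨by simp, h2⟩
        · rw [hbegins_ne r hrs]; exact ⟨h1, h2⟩
  have hTset : transitSet E' (srcSet (Fin.snoc a i : Fin (q + 1) → ℤ))
      (srcSet (Fin.snoc b (i + 1) : Fin (q + 1) → ℤ))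
      = (transitSet E (srcSet a) (srcSet b)).erase i := by
    rw [hA', hB']
    ext r
    simp only [transitSet, Finset.mem_sdiff, Finset.mem_union, Finset.mem_image,
      Finset.mem_erase, Finset.mem_insert, not_or]
    constructor
    · rintro ⟨htch, ⟨hri, hrA⟩, hri1, hrB⟩
      refine ⟨hri, ?_, hrA, hrB⟩
      rcases htch with ⟨e, he, h1⟩ | ⟨e, he, h2⟩
      · rcases (hmemE' e).mp he with rfl | ⟨heE, _⟩
        · exact Or.inl ⟨(s, i), hs, h1⟩
        · exact Or.inl ⟨e, heE, h1⟩
      · rcases (hmemE' e).mp he with rfl | ⟨heE, _⟩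
        · exact absurd h2 (fun h => hri1 h.symm)
        · exact Or.inr ⟨e, heE, h2⟩
    · rintro ⟨hri, htch, hrA, hrB⟩
      have hri1 : r ≠ i + 1 := by
        rintro rfl
        rcases htch with ⟨e, he, h1⟩ | ⟨e, he, h2⟩
        · exact hne1_i1 e he h1
        · exact hne_i1 e he h2
      refine ⟨?_, ⟨hri, hrA⟩, hri1, hrB⟩
      rcases htch with ⟨e, he, h1⟩ | ⟨e, he, h2⟩
      · rcases eq_or_ne e (s, i) with rfl | hne
        · exact Or.inl ⟨(s, i + 1), hsE', h1⟩
        · exact Or.inl ⟨e, (hmemE' e).mpr (Or.inr ⟨he, hne⟩), h1⟩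
      · rcases eq_or_ne e (s, i) with rfl | hne
        · refine Or.inl ⟨(i, t0), (hmemE' _).mpr (Or.inr ⟨htiE, ?_⟩), h2⟩
          intro hc
          have hcontra : i = s := congrArg Prod.fst hc
          omega
        · exact Or.inr ⟨e, (hmemE' e).mpr (Or.inr ⟨he, hne⟩), h2⟩
  have hTcard_pos : 0 < (transitSet E (srcSet a) (srcSet b)).card :=
    Finset.card_pos.mpr ⟨i, htr'⟩
  have hdp_erase_s : ∀ x, DP E x s → DP (E.erase (s, i)) x s := by
    intro x h
    induction h using Relation.ReflTransGen.head_induction_on with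
    | refl => exact Relation.ReflTransGen.refl
    | @head u v hxz hz ih =>
      refine Relation.ReflTransGen.head (Finset.mem_erase.mpr ⟨?_, hxz⟩) ih
      intro hc
      injection hc with h1 h2
      rw [h2] at hz
      have := dp_le hf.edge_lt hz
      omega
  have hdp_avoid : ∀ x y, DP E x y → ¬ DP E x s → DP (E.erase (s, i)) x y := by
    intro x y h
    induction h using Relation.ReflTransGen.head_induction_on with
    | refl => intro _; exact Relation.ReflTransGen.refl
    | @head u v hxz hz ih =>
      intro hns
      have hzs : ¬ DP E v s := fun h' => hns (Relation.ReflTransGen.head hxz h')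
      refine Relation.ReflTransGen.head (Finset.mem_erase.mpr ⟨?_, hxz⟩) (ih hzs)
      intro hc
      injection hc with h1 h2
      apply hns
      rw [h1]
      exact Relation.ReflTransGen.refl
  have hdpE'_to_s : ∀ x, DP E' x s → DP E x s := by
    intro x h
    induction h using Relation.ReflTransGen.head_induction_on with
    | refl => exact Relation.ReflTransGen.refl
    | @head u v hxz hz ih =>
      rcases (hmemE' _).mp hxz with hc | ⟨heE, _⟩
      · exfalso
        injection hc with h1 h2
        rw [h2] at hz
        have := dp_le hlt' hz
        omega
      · exact Relation.ReflTransGen.head heE ih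
  have hdpE'_to_i1 : ∀ x, DP E' x (i + 1) → x = i + 1 ∨ DP E' x s := by
    intro x h
    induction h using Relation.ReflTransGen.head_induction_on with
    | refl => exact Or.inl rfl
    | @head u v hxz hz ih =>
      rcases ih with heq | hdps
      · right
        rw [heq] at hxz
        rw [hends_i1' u hxz]
        exact Relation.ReflTransGen.refl
      · exact Or.inr (Relation.ReflTransGen.head hxz hdps)
  have herase_sub : E.erase (s, i) ⊆ E' := by rw [hE'def]; exact Finset.subset_insert _ _
  have hs_to_i1 : ∀ x, DP E x s → Linked E' x (i + 1) := by
    intro x h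
    have h1 : DP E' x s := dp_mono herase_sub (hdp_erase_s x h)
    exact dp_linked (Relation.ReflTransGen.tail h1 hsE')
  have hlink_i1 : ∀ x, Linked E' x (i + 1) → x = i + 1 ∨ DP E x s := by
    intro x h
    have hdp : DP E' x (i + 1) := sink_dp isflow' (Finset.mem_insert_self _ _) h
    rcases hdpE'_to_i1 x hdp with h' | h'
    · exact Or.inl h'
    · exact Or.inr (hdpE'_to_s x h')
  constructor
  · refine ⟨?_, ?_⟩
    · rw [hA', hB']; exact isflow'
    · intro r hr
      have hr' : r ∈ transitSet E' (srcSet (Fin.snoc a i : Fin (q + 1) → ℤ))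
          (srcSet (Fin.snoc b (i + 1) : Fin (q + 1) → ℤ)) := hr
      rw [hTset] at hr'
      exact hbd r (Finset.mem_erase.mp hr').2
  · intro σ τ hσ hτ
    have hsinkE' : ∀ k : Fin (q + 1),
        (Fin.snoc b (i + 1) : Fin (q + 1) → ℤ) k ∈ insert (i + 1) (srcSet b) := by
      intro k
      rcases eq_or_ne k (Fin.last q) with rfl | hk
      · rw [Fin.snoc_last]; exact Finset.mem_insert_self _ _
      · obtain ⟨k', rfl⟩ := Fin.exists_castSucc_eq.mpr hk
        rw [Fin.snoc_castSucc]
        exact Finset.mem_insert_of_mem ((hmemB _).mpr ⟨k', rfl⟩)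
    have hτcast : ∀ j : Fin q,
        Linked E' (a j) ((Fin.snoc b (i + 1) : Fin (q + 1) → ℤ) (τ j.castSucc)) := by
      intro j
      have h := hτ j.castSucc
      rwa [Fin.snoc_castSucc] at h
    have hτlast0 : Linked E' i ((Fin.snoc b (i + 1) : Fin (q + 1) → ℤ) (τ (Fin.last q))) := by
      have h := hτ (Fin.last q)
      rwa [Fin.snoc_last] at h
    have hcase : ∀ j : Fin q, (DP E (a j) s ∧ τ j.castSucc = Fin.last q) ∨
        (¬ DP E (a j) s ∧ τ j.castSucc = (σ j).castSucc) := by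
      intro j
      by_cases hdp : DP E (a j) s
      · left
        refine ⟨hdp, ?_⟩
        have h1 : Linked E' ((Fin.snoc b (i + 1) : Fin (q + 1) → ℤ) (τ j.castSucc)) (i + 1) :=
          Relation.ReflTransGen.trans (linked_symm (hτcast j)) (hs_to_i1 _ hdp)
        have h2 := sink_unique_s5 isflow' (hsinkE' _) (Finset.mem_insert_self _ _) h1
        apply hbinj
        rw [h2, Fin.snoc_last]
      · right
        refine ⟨hdp, ?_⟩
        have hbmem : b (σ j) ∈ srcSet b := (hmemB _).mpr ⟨σ j, rfl⟩
        have hdpb : DP E (a j) (b (σ j)) := sink_dp hf hbmem (hσ j)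
        have h1 : Linked E' (a j) (b (σ j)) :=
          dp_linked (dp_mono herase_sub (hdp_avoid _ _ hdpb hdp))
        have h2 : Linked E' ((Fin.snoc b (i + 1) : Fin (q + 1) → ℤ) (τ j.castSucc))
            ((Fin.snoc b (i + 1) : Fin (q + 1) → ℤ) ((σ j).castSucc)) := by
          rw [Fin.snoc_castSucc]
          exact Relation.ReflTransGen.trans (linked_symm (hτcast j)) h1
        exact hbinj (sink_unique_s5 isflow' (hsinkE' _) (hsinkE' _) h2)
    have hτlast_ne : τ (Fin.last q) ≠ Fin.last q := by
      intro hlast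
      rw [hlast, Fin.snoc_last] at hτlast0
      rcases hlink_i1 i hτlast0 with h | h
      · omega
      · have := dp_le hf.edge_lt h; omega
    have hexists : ∃ j : Fin q, DP E (a j) s := by
      by_contra hno
      push_neg at hno
      apply hτlast_ne
      by_contra hne
      obtain ⟨m, hm⟩ := Fin.exists_castSucc_eq.mpr hne
      have h1 := (hcase (σ⁻¹ m)).resolve_left (fun h => hno _ h.1)
      have h2 : τ ((σ⁻¹ m).castSucc) = τ (Fin.last q) := by
        rw [h1.2, Equiv.Perm.coe_inv, Equiv.apply_symm_apply, hm]
      have h3 := τ.injective h2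
      exact absurd h3 (Fin.castSucc_lt_last _).ne
    obtain ⟨j0, hj0⟩ := hexists
    have hτj0 : τ j0.castSucc = Fin.last q := ((hcase j0).resolve_right (fun h => h.1 hj0)).2
    have hτlast : τ (Fin.last q) = (σ j0).castSucc := by
      obtain ⟨m, hm⟩ := Fin.exists_castSucc_eq.mpr hτlast_ne
      have hmm : m = σ j0 := by
        by_contra hne2
        have hj1 : σ⁻¹ m ≠ j0 := by
          intro h
          apply hne2
          rw [← h, Equiv.Perm.coe_inv, Equiv.apply_symm_apply]
        rcases hcase (σ⁻¹ m) with ⟨_, heq1⟩ | ⟨_, heq1⟩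
        · have h4 := τ.injective (heq1.trans hτj0.symm)
          exact hj1 (Fin.castSucc_injective _ h4)
        · have h3 : τ ((σ⁻¹ m).castSucc) = τ (Fin.last q) := by
            rw [heq1, Equiv.Perm.coe_inv, Equiv.apply_symm_apply, hm]
          have h4 := τ.injective h3
          exact absurd h4 (Fin.castSucc_lt_last _).ne
      rw [← hm, hmm]
    have hlast_ne' : (j0.castSucc : Fin (q + 1)) ≠ Fin.last q := (Fin.castSucc_lt_last _).ne
    have hrange : (Fin.last q) ∉ Set.range (castEmb q) := by
      rintro ⟨k, hk⟩
      exact (Fin.castSucc_lt_last k).ne hk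
    have heqperm : τ * Equiv.swap j0.castSucc (Fin.last q) = σ.viaFintypeEmbedding (castEmb q) := by
      refine Equiv.ext fun x => ?_
      rw [Equiv.Perm.mul_apply]
      rcases eq_or_ne x (Fin.last q) with rfl | hx
      · rw [Equiv.swap_apply_right, hτj0,
          Equiv.Perm.viaFintypeEmbedding_apply_notMem_range σ (castEmb q) hrange]
      · obtain ⟨k, rfl⟩ := Fin.exists_castSucc_eq.mpr hx
        rcases eq_or_ne k j0 with rfl | hk
        · rw [Equiv.swap_apply_left, hτlast]
          exact (Equiv.Perm.viaFintypeEmbedding_apply_image σ (castEmb q) k).symm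
        · have hne3 : (k.castSucc : Fin (q + 1)) ≠ j0.castSucc :=
            fun h => hk (Fin.castSucc_injective _ h)
          rw [Equiv.swap_apply_of_ne_of_ne hne3 (Fin.castSucc_lt_last _).ne]
          have h4 : τ k.castSucc = (σ k).castSucc := by
            rcases hcase k with ⟨_, heq1⟩ | ⟨_, heq1⟩
            · exfalso
              have h5 := τ.injective (heq1.trans hτj0.symm)
              exact hk (Fin.castSucc_injective _ h5)
            · exact heq1
          rw [h4]
          exact (Equiv.Perm.viaFintypeEmbedding_apply_image σ (castEmb q) k).symm
    have hsign : (Equiv.Perm.sign τ : ℤ) = - (Equiv.Perm.sign σ : ℤ) := by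
      have h1 := congrArg Equiv.Perm.sign heqperm
      rw [map_mul, Equiv.Perm.sign_swap hlast_ne',
        Equiv.Perm.viaFintypeEmbedding_sign] at h1
      rw [mul_neg_one] at h1
      have h2 : Equiv.Perm.sign τ = - Equiv.Perm.sign σ := neg_eq_iff_eq_neg.mp h1
      rw [h2]
      simp
    have hS0 : 0 ≤ ∑ j : Fin q, (b j - i) :=
      Finset.sum_nonneg fun j _ => by have := hbi j; omega
    have hsum : (∑ j : Fin (q + 1), ((Fin.snoc b (i + 1) : Fin (q + 1) → ℤ) j - i))
        = (∑ j : Fin q, (b j - i)) + 1 := by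
      rw [Fin.sum_univ_castSucc]
      simp only [Fin.snoc_castSucc, Fin.snoc_last]
      ring
    have hfinal_exp : ((∑ j : Fin q, (b j - i)) + 1).toNat
        + ((transitSet E (srcSet a) (srcSet b)).card - 1)
        = (∑ j : Fin q, (b j - i)).toNat + (transitSet E (srcSet a) (srcSet b)).card := by
      omega
    simp only [signValue]
    rw [hTset, Finset.card_erase_of_mem htr', hsum, hsign, hfinal_exp]
    ring
end
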